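/- arXiv:1703.08693 — 5 statements merged into one kernel-verified Lean document; each statement's English description precedes it below -/
import Mathlib

section
/- Let (P, y) be a KZ doctrine on a 2-category 𝒞, regarded as a pseudofunctor P : 𝒞 ⟶ 𝒞 with PF := lan_F on 1-cells (Marmolejo–Wood). Let L : A ⟶ B be P-admissible with adjunction PL ⊣ res_L (unit η), set R_L := res_L·y_B, and let φ_L : y_A ⟶ R_L·L be the composite of η whiskered by y_A with res_L whiskered on y_L. Then the 2-cell Pφ_L : Py_A ⟶ PR_L·PL, obtained by applying the pseudofunctor P to φ_L and composing with the pseudofunctoriality constraints, exhibits PL as an absolute left lifting of Py_A through PR_L. -/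
open CategoryTheory Bicategory

universe w v u

variable {𝒞 : Type u} [Bicategory.{w, v} 𝒞]

/-- A 2-cell `η : I ⟶ L ≫ R` exhibits `R` as a left extension of `I` along `L` when
pasting with `η` gives a bijection between 2-cells `R ⟶ M` and 2-cells `I ⟶ L ≫ M`. -/
def ExhibitsLeftExt {a b c : 𝒞} (L : a ⟶ b) (I : a ⟶ c) (R : b ⟶ c)
    (η : I ⟶ L ≫ R) : Prop :=
  ∀ M : b ⟶ c, Function.Bijective (fun σ : R ⟶ M => η ≫ L ◁ σ)

/-- The left extension `(R, η)` of `I` along `L` is respected by `E` when the whiskering of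
`η` by `E` exhibits `R ≫ E` as a left extension of `I ≫ E` along `L`. -/
def RespectsLeftExt {a b c d : 𝒞} (L : a ⟶ b) (I : a ⟶ c) (R : b ⟶ c)
    (η : I ⟶ L ≫ R) (E : c ⟶ d) : Prop :=
  ExhibitsLeftExt L (I ≫ E) (R ≫ E) ((η ▷ E) ≫ (α_ L R E).hom)

/-- A 2-cell `η : I ⟶ L ≫ R` exhibits `L` as a left lifting of `I` through `R` when pasting
with `η` gives a bijection between 2-cells `L ⟶ K` and 2-cells `I ⟶ K ≫ R`. -/
def ExhibitsLeftLift {a b c : 𝒞} (R : b ⟶ c) (I : a ⟶ c) (L : a ⟶ b)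
    (η : I ⟶ L ≫ R) : Prop :=
  ∀ K : a ⟶ b, Function.Bijective (fun δ : L ⟶ K => η ≫ δ ▷ R)

/-- The left lifting is absolute when it is preserved by whiskering with any 1-cell `F`. -/
def ExhibitsAbsLeftLift {a b c : 𝒞} (R : b ⟶ c) (I : a ⟶ c) (L : a ⟶ b)
    (η : I ⟶ L ≫ R) : Prop :=
  ∀ {x : 𝒞} (F : x ⟶ a),
    ExhibitsLeftLift R (F ≫ I) (F ≫ L) ((F ◁ η) ≫ (α_ F L R).inv)

/-- A 1-cell is (representably) fully faithful when whiskering by it is bijective on 2-cells. -/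
def FullyFaithful1Cell {a b : 𝒞} (F : a ⟶ b) : Prop :=
  ∀ {x : 𝒞} (u v : x ⟶ a), Function.Bijective (fun σ : u ⟶ v => σ ▷ F)

/-- A KZ doctrine on a 2-category (Marmolejo–Wood style, in terms of left extensions). -/
structure KZDoctrine (𝒞 : Type u) [Bicategory.{w, v} 𝒞] where
  /-- action on objects -/
  P : 𝒞 → 𝒞
  /-- the units -/
  y : ∀ A : 𝒞, A ⟶ P A
  /-- chosen left extensions along the units -/
  ext : ∀ {A C : 𝒞}, (A ⟶ P C) → (P A ⟶ P C)
  /-- the invertible 2-cells exhibiting the chosen left extensions -/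
  c : ∀ {A C : 𝒞} (F : A ⟶ P C), F ≅ y A ≫ ext F
  ext_isLeftExt : ∀ {A C : 𝒞} (F : A ⟶ P C),
    ExhibitsLeftExt (y A) F (ext F) (c F).hom
  /-- (a) the identity 2-cell exhibits `𝟙 (P A)` as a left extension of `y A` along `y A` -/
  y_selfExt : ∀ A : 𝒞, ExhibitsLeftExt (y A) (y A) (𝟙 (P A)) (ρ_ (y A)).inv
  /-- (b) the chosen left extensions respect each other -/
  ext_respects : ∀ {A B C : 𝒞} (F : A ⟶ P B) (G : B ⟶ P C),
    RespectsLeftExt (y A) F (ext F) (c F).hom (ext G)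

/-- `lan L` (also denoted `PL`), the chosen left extension of `y B ∘ L` along `y A`. -/
abbrev KZDoctrine.lan (D : KZDoctrine 𝒞) {A B : 𝒞} (L : A ⟶ B) : D.P A ⟶ D.P B :=
  D.ext (L ≫ D.y B)

/-- An object `X` is `P`-cocomplete when every `G : A ⟶ X` admits a left extension along
`y A` exhibited by an invertible 2-cell, and these left extensions respect the chosen left
extensions of the KZ doctrine. -/
def PCocomplete (D : KZDoctrine 𝒞) (X : 𝒞) : Prop :=
  ∀ {A : 𝒞} (G : A ⟶ X), ∃ (Gb : D.P A ⟶ X) (cG : G ≅ D.y A ≫ Gb),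
    ExhibitsLeftExt (D.y A) G Gb cG.hom ∧
    ∀ {A' : 𝒞} (F : A' ⟶ D.P A),
      RespectsLeftExt (D.y A') F (D.ext F) (D.c F).hom Gb

/-- A 1-cell is a `P`-homomorphism when it respects all left extensions along units. -/
def PHomomorphism (D : KZDoctrine 𝒞) {X Y : 𝒞} (E : X ⟶ Y) : Prop :=
  ∀ {A : 𝒞} (G : A ⟶ X) (Gb : D.P A ⟶ X) (η : G ⟶ D.y A ≫ Gb),
    ExhibitsLeftExt (D.y A) G Gb η → RespectsLeftExt (D.y A) G Gb η E

/-- The data `(R, φ)` witnesses `P`-admissibility of `L`: `φ` exhibits `R` as a left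
extension of `y A` along `L`, and this left extension is respected by every left extension
`Hb : P A ⟶ X` along `y A` into every `P`-cocomplete object `X`. -/
def AdmissibleData (D : KZDoctrine 𝒞) {A B : 𝒞} (L : A ⟶ B) (R : B ⟶ D.P A)
    (φ : D.y A ⟶ L ≫ R) : Prop :=
  ExhibitsLeftExt L (D.y A) R φ ∧
  ∀ {X : 𝒞}, PCocomplete D X →
    ∀ (H : A ⟶ X) (Hb : D.P A ⟶ X) (cH : H ≅ D.y A ≫ Hb),
      ExhibitsLeftExt (D.y A) H Hb cH.hom → RespectsLeftExt L (D.y A) R φ Hb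

/-- A 1-cell `L` is `P`-admissible when some `(R, φ)` witnesses its admissibility. -/
def PAdmissible (D : KZDoctrine 𝒞) {A B : 𝒞} (L : A ⟶ B) : Prop :=
  ∃ (R : B ⟶ D.P A) (φ : D.y A ⟶ L ≫ R), AdmissibleData D L R φ

/-- The action of the pseudofunctor `P` on a 2-cell `θ : F ⟶ G`, defined via the
universal property of the chosen left extension `lan F`. -/
noncomputable def KZDoctrine.map2 (D : KZDoctrine 𝒞) {A B : 𝒞} {F G : A ⟶ B}
    (θ : F ⟶ G) : D.lan F ⟶ D.lan G :=
  Function.surjInv (D.ext_isLeftExt (F ≫ D.y B) (D.lan G)).2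
    ((θ ▷ D.y B) ≫ (D.c (G ≫ D.y B)).hom)

/-- The (inverse) pseudofunctoriality constraint `P (F ≫ G) ⟶ P F ≫ P G`, arising from
the uniqueness of left extensions. -/
noncomputable def KZDoctrine.comp2 (D : KZDoctrine 𝒞) {A B C : 𝒞} (F : A ⟶ B)
    (G : B ⟶ C) : D.lan (F ≫ G) ⟶ D.lan F ≫ D.lan G :=
  Function.surjInv (D.ext_isLeftExt ((F ≫ G) ≫ D.y C) (D.lan F ≫ D.lan G)).2
    ((α_ F G (D.y C)).hom ≫ (F ◁ (D.c (G ≫ D.y C)).hom) ≫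
      (α_ F (D.y B) (D.lan G)).inv ≫ ((D.c (F ≫ D.y B)).hom ▷ D.lan G) ≫
      (α_ (D.y A) (D.lan F) (D.lan G)).hom)


/-! ### Auxiliary machinery -/

namespace ExhibitsLeftExt

variable {a b c : 𝒞} {L : a ⟶ b} {I : a ⟶ c} {R : b ⟶ c} {η : I ⟶ L ≫ R}

noncomputable def desc (h : ExhibitsLeftExt L I R η) {M : b ⟶ c} (τ : I ⟶ L ≫ M) : R ⟶ M :=
  Function.surjInv (h M).2 τ

@[simp] lemma fac (h : ExhibitsLeftExt L I R η) {M : b ⟶ c} (τ : I ⟶ L ≫ M) :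
    η ≫ L ◁ h.desc τ = τ :=
  Function.surjInv_eq (h M).2 τ

lemma hom_ext (h : ExhibitsLeftExt L I R η) {M : b ⟶ c} {σ₁ σ₂ : R ⟶ M}
    (e : η ≫ L ◁ σ₁ = η ≫ L ◁ σ₂) : σ₁ = σ₂ := (h M).1 e

/-- transport an extension along an iso of the extended 1-cell -/
lemma ofIso (h : ExhibitsLeftExt L I R η) {I' : a ⟶ c} (φ : I' ≅ I) :
    ExhibitsLeftExt L I' R (φ.hom ≫ η) := by
  intro M
  have e : Function.Bijective (fun τ : I ⟶ L ≫ M => φ.hom ≫ τ) :=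
    (Equiv.mk (fun τ : I ⟶ L ≫ M => φ.hom ≫ τ) (fun τ => φ.inv ≫ τ)
      (fun τ => by simp) (fun τ => by simp)).bijective
  have : (fun σ : R ⟶ M => (φ.hom ≫ η) ≫ L ◁ σ)
      = (fun τ : I ⟶ L ≫ M => φ.hom ≫ τ) ∘ (fun σ : R ⟶ M => η ≫ L ◁ σ) := by
    funext σ; simp
  rw [this]
  exact e.comp (h M)

/-- comparison iso between two extensions of the same cell -/
noncomputable def uniq {R' : b ⟶ c} {η' : I ⟶ L ≫ R'}
    (h : ExhibitsLeftExt L I R η) (h' : ExhibitsLeftExt L I R' η') : R ≅ R' where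
  hom := h.desc η'
  inv := h'.desc η
  hom_inv_id := h.hom_ext (by
    rw [Bicategory.whiskerLeft_comp, ← Category.assoc, h.fac, h'.fac, Bicategory.whiskerLeft_id, Category.comp_id])
  inv_hom_id := h'.hom_ext (by
    rw [Bicategory.whiskerLeft_comp, ← Category.assoc, h'.fac, h.fac, Bicategory.whiskerLeft_id, Category.comp_id])

@[simp] lemma uniq_fac {R' : b ⟶ c} {η' : I ⟶ L ≫ R'}
    (h : ExhibitsLeftExt L I R η) (h' : ExhibitsLeftExt L I R' η') :
    η ≫ L ◁ (h.uniq h').hom = η' := h.fac η'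

end ExhibitsLeftExt

namespace KZProof

/-- hom-level mate bijection for a bicategorical adjunction -/
noncomputable def mateEquiv {a b x : 𝒞} {f : a ⟶ b} {g : b ⟶ a} (adj : Adjunction f g)
    (F : x ⟶ a) (K : x ⟶ b) : (F ≫ f ⟶ K) ≃ (F ⟶ K ≫ g) where
  toFun δ := (ρ_ F).inv ≫ F ◁ adj.unit ≫ (α_ F f g).inv ≫ δ ▷ g
  invFun γ := γ ▷ f ≫ (α_ K g f).hom ≫ K ◁ adj.counit ≫ (ρ_ K).hom
  left_inv δ := by
    dsimp only
    calc ((ρ_ F).inv ≫ F ◁ adj.unit ≫ (α_ F f g).inv ≫ δ ▷ g) ▷ f ≫ (α_ K g f).hom ≫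
            K ◁ adj.counit ≫ (ρ_ K).hom
        = 𝟙 _ ⊗≫ F ◁ adj.unit ▷ f ⊗≫ (δ ▷ (g ≫ f) ≫ K ◁ adj.counit) ⊗≫ 𝟙 _ ≫ (ρ_ K).hom := by
          bicategory
      _ = 𝟙 _ ⊗≫ F ◁ leftZigzag adj.unit adj.counit ⊗≫ δ ▷ 𝟙 b ≫ (ρ_ K).hom := by
          rw [← whisker_exchange]; dsimp only [leftZigzag]; bicategory
      _ = δ := by
          rw [adj.left_triangle]; bicategory
  right_inv γ := by
    dsimp only
    calc (ρ_ F).inv ≫ F ◁ adj.unit ≫ (α_ F f g).inv ≫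
            (γ ▷ f ≫ (α_ K g f).hom ≫ K ◁ adj.counit ≫ (ρ_ K).hom) ▷ g
        = 𝟙 _ ⊗≫ (F ◁ adj.unit ≫ γ ▷ (f ≫ g)) ⊗≫ K ◁ adj.counit ▷ g ⊗≫ 𝟙 _ := by
          bicategory
      _ = (ρ_ F).inv ≫ γ ▷ 𝟙 a ⊗≫ K ◁ rightZigzag adj.unit adj.counit ⊗≫ 𝟙 _ := by
          rw [whisker_exchange]; dsimp only [rightZigzag]; bicategory
      _ = γ := by
          rw [adj.right_triangle]; bicategory

section KZ

variable (D : KZDoctrine 𝒞) {A B : 𝒞} (L : A ⟶ B) (res : D.P B ⟶ D.P A)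
  (adj : Adjunction (D.lan L) res)

lemma map2_fac {A' B' : 𝒞} {F G : A' ⟶ B'} (θ : F ⟶ G) :
    (D.c (F ≫ D.y B')).hom ≫ D.y A' ◁ D.map2 θ = (θ ▷ D.y B') ≫ (D.c (G ≫ D.y B')).hom :=
  Function.surjInv_eq ((D.ext_isLeftExt (F ≫ D.y B')) (D.lan G)).2 _

lemma comp2_fac {A' B' C' : 𝒞} (F : A' ⟶ B') (G : B' ⟶ C') :
    (D.c ((F ≫ G) ≫ D.y C')).hom ≫ D.y A' ◁ D.comp2 F G =
      (α_ F G (D.y C')).hom ≫ (F ◁ (D.c (G ≫ D.y C')).hom) ≫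
        (α_ F (D.y B') (D.lan G)).inv ≫ ((D.c (F ≫ D.y B')).hom ▷ D.lan G) ≫
        (α_ (D.y A') (D.lan F) (D.lan G)).hom :=
  Function.surjInv_eq ((D.ext_isLeftExt ((F ≫ G) ≫ D.y C')) (D.lan F ≫ D.lan G)).2 _

/-- the comparison 2-cell from `ext (y B ≫ res)` to `res` -/
noncomputable def chi : D.ext (D.y B ≫ res) ⟶ res :=
  Function.surjInv ((D.ext_isLeftExt (D.y B ≫ res)) res).2 (𝟙 (D.y B ≫ res))

lemma chi_fac : (D.c (D.y B ≫ res)).hom ≫ D.y B ◁ chi D res = 𝟙 (D.y B ≫ res) :=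
  Function.surjInv_eq ((D.ext_isLeftExt (D.y B ≫ res)) res).2 _

lemma whiskerLeft_chi : D.y B ◁ chi D res = (D.c (D.y B ≫ res)).inv := by
  rw [← Iso.hom_comp_eq_id]
  exact chi_fac D res

/-- the 2-cell `φ_L : y A ⟶ L ≫ (y B ≫ res)` -/
noncomputable def theta : D.y A ⟶ L ≫ (D.y B ≫ res) :=
  (ρ_ (D.y A)).inv ≫ (D.y A ◁ adj.unit) ≫ (α_ (D.y A) (D.lan L) res).inv ≫
    ((D.c (L ≫ D.y B)).inv ▷ res) ≫ (α_ L (D.y B) res).hom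

noncomputable def xi : D.y A ⟶ D.y A ≫ (D.lan L ≫ D.ext (D.y B ≫ res)) :=
  theta D L res adj ≫ L ◁ (D.c (D.y B ≫ res)).hom ≫
    (α_ L (D.y B) (D.ext (D.y B ≫ res))).inv ≫
    ((D.c (L ≫ D.y B)).hom ▷ D.ext (D.y B ≫ res)) ≫
    (α_ (D.y A) (D.lan L) (D.ext (D.y B ≫ res))).hom

noncomputable def uE : 𝟙 (D.P A) ⟶ D.lan L ≫ D.ext (D.y B ≫ res) :=
  Function.surjInv ((D.y_selfExt A) (D.lan L ≫ D.ext (D.y B ≫ res))).2 (xi D L res adj)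

lemma uE_fac : (ρ_ (D.y A)).inv ≫ D.y A ◁ uE D L res adj = xi D L res adj :=
  Function.surjInv_eq ((D.y_selfExt A) _).2 _

lemma uE_chi : uE D L res adj ≫ D.lan L ◁ chi D res = adj.unit := by
  apply ((D.y_selfExt A) (D.lan L ≫ res)).1
  dsimp only
  rw [Bicategory.whiskerLeft_comp, ← Category.assoc ((ρ_ (D.y A)).inv), uE_fac]
  calc xi D L res adj ≫ D.y A ◁ (D.lan L ◁ chi D res)
      = theta D L res adj ≫ L ◁ (D.c (D.y B ≫ res)).hom ⊗≫
          ((D.c (L ≫ D.y B)).hom ▷ D.ext (D.y B ≫ res) ≫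
            (D.y A ≫ D.lan L) ◁ chi D res) ⊗≫ 𝟙 _ := by
        dsimp only [xi]; bicategory
    _ = theta D L res adj ≫ (L ◁ ((D.c (D.y B ≫ res)).hom ≫ D.y B ◁ chi D res)) ⊗≫
          (D.c (L ≫ D.y B)).hom ▷ res ⊗≫ 𝟙 _ := by
        rw [← whisker_exchange]; bicategory
    _ = (ρ_ (D.y A)).inv ≫ D.y A ◁ adj.unit ≫ (α_ (D.y A) (D.lan L) res).inv ≫
          (((D.c (L ≫ D.y B)).inv ≫ (D.c (L ≫ D.y B)).hom) ▷ res) ≫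
          (α_ (D.y A) (D.lan L) res).hom := by
        rw [chi_fac]; dsimp only [theta]; bicategory
    _ = (ρ_ (D.y A)).inv ≫ D.y A ◁ adj.unit := by simp

noncomputable def sigma0 : res ⟶ D.ext (D.y B ≫ res) :=
  (ρ_ res).inv ≫ res ◁ uE D L res adj ≫ (α_ res (D.lan L) (D.ext (D.y B ≫ res))).inv ≫
    adj.counit ▷ D.ext (D.y B ≫ res) ≫ (λ_ (D.ext (D.y B ≫ res))).hom

lemma sigma0_chi : sigma0 D L res adj ≫ chi D res = 𝟙 res := by
  dsimp only [sigma0]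
  rw [Category.assoc, Category.assoc, Category.assoc, Category.assoc]
  calc (ρ_ res).inv ≫ res ◁ uE D L res adj ≫ (α_ res (D.lan L) (D.ext (D.y B ≫ res))).inv ≫
          adj.counit ▷ D.ext (D.y B ≫ res) ≫ (λ_ (D.ext (D.y B ≫ res))).hom ≫ chi D res
      = 𝟙 _ ⊗≫ res ◁ uE D L res adj ⊗≫
          (adj.counit ▷ D.ext (D.y B ≫ res) ≫ 𝟙 (D.P B) ◁ chi D res) ⊗≫ 𝟙 _ := by
        bicategory
    _ = 𝟙 _ ⊗≫ res ◁ (uE D L res adj ≫ D.lan L ◁ chi D res) ⊗≫ adj.counit ▷ res ⊗≫ 𝟙 _ := by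
        rw [← whisker_exchange]; bicategory
    _ = 𝟙 _ ⊗≫ rightZigzag adj.unit adj.counit ⊗≫ 𝟙 _ := by
        rw [uE_chi]; dsimp only [rightZigzag]; bicategory
    _ = 𝟙 res := by
        rw [adj.right_triangle]; bicategory

lemma whiskerLeft_sigma0 : D.y B ◁ sigma0 D L res adj = (D.c (D.y B ≫ res)).hom := by
  have h := congrArg (fun t => D.y B ◁ t) (sigma0_chi D L res adj)
  simp only [Bicategory.whiskerLeft_comp, Bicategory.whiskerLeft_id] at h
  rw [whiskerLeft_chi] at h
  exact (Iso.comp_inv_eq_id _).mp h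

lemma chi_sigma0 : chi D res ≫ sigma0 D L res adj = 𝟙 (D.ext (D.y B ≫ res)) := by
  apply ((D.ext_isLeftExt (D.y B ≫ res)) _).1
  dsimp only
  simp only [Bicategory.whiskerLeft_comp, Bicategory.whiskerLeft_id, Category.comp_id]
  rw [← Category.assoc, chi_fac, Category.id_comp, whiskerLeft_sigma0]

noncomputable def sigmaIso : res ≅ D.ext (D.y B ≫ res) where
  hom := sigma0 D L res adj
  inv := chi D res
  hom_inv_id := sigma0_chi D L res adj
  inv_hom_id := chi_sigma0 D L res adj

end KZ

section KZ4

variable (D : KZDoctrine 𝒞) (A : 𝒞)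

/-- the multiplication `m : PPA ⟶ PA` -/
noncomputable abbrev mm : D.P (D.P A) ⟶ D.P A := D.ext (𝟙 (D.P A))

/-- the canonical comparison `P y_A ⟶ y_{PA}` -/
noncomputable def nu : D.lan (D.y A) ⟶ D.y (D.P A) :=
  Function.surjInv ((D.ext_isLeftExt (D.y A ≫ D.y (D.P A))) (D.y (D.P A))).2
    (𝟙 (D.y A ≫ D.y (D.P A)))

lemma nu_fac : (D.c (D.y A ≫ D.y (D.P A))).hom ≫ D.y A ◁ nu D A = 𝟙 (D.y A ≫ D.y (D.P A)) :=
  Function.surjInv_eq ((D.ext_isLeftExt (D.y A ≫ D.y (D.P A))) _).2 _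

/-- restriction of the unit of `P y_A ⊣ m` -/
noncomputable def w0 : D.y A ⟶ D.y A ≫ (D.lan (D.y A) ≫ mm D A) :=
  (ρ_ (D.y A)).inv ≫ (D.y A ◁ (D.c (𝟙 (D.P A))).hom) ≫
    (α_ (D.y A) (D.y (D.P A)) (mm D A)).inv ≫
    ((D.c (D.y A ≫ D.y (D.P A))).hom ▷ mm D A) ≫
    (α_ (D.y A) (D.lan (D.y A)) (mm D A)).hom

/-- the unit of `P y_A ⊣ m` -/
noncomputable def ww : 𝟙 (D.P A) ⟶ D.lan (D.y A) ≫ mm D A :=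
  Function.surjInv ((D.y_selfExt A) (D.lan (D.y A) ≫ mm D A)).2 (w0 D A)

lemma ww_fac : (ρ_ (D.y A)).inv ≫ D.y A ◁ ww D A = w0 D A :=
  Function.surjInv_eq ((D.y_selfExt A) _).2 _

lemma whiskerLeft_ww : D.y A ◁ ww D A = (ρ_ (D.y A)).hom ≫ w0 D A := by
  rw [← ww_fac]; simp

/-- `m ≫ P y_A` is a left extension of `𝟙 ≫ P y_A` along `y_{PA}` -/
lemma hmp : ExhibitsLeftExt (D.y (D.P A)) (𝟙 (D.P A) ≫ D.lan (D.y A))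
    (mm D A ≫ D.lan (D.y A))
    (((D.c (𝟙 (D.P A))).hom ▷ D.lan (D.y A)) ≫
      (α_ (D.y (D.P A)) (mm D A) (D.lan (D.y A))).hom) :=
  D.ext_respects (𝟙 (D.P A)) (D.y A ≫ D.y (D.P A))

/-- the counit of `P y_A ⊣ m` -/
noncomputable def vv : mm D A ≫ D.lan (D.y A) ⟶ 𝟙 (D.P (D.P A)) :=
  Function.surjInv ((hmp D A) (𝟙 (D.P (D.P A)))).2
    ((λ_ (D.lan (D.y A))).hom ≫ nu D A ≫ (ρ_ (D.y (D.P A))).inv)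

lemma vv_fac : (((D.c (𝟙 (D.P A))).hom ▷ D.lan (D.y A)) ≫
      (α_ (D.y (D.P A)) (mm D A) (D.lan (D.y A))).hom) ≫ (D.y (D.P A) ◁ vv D A) =
    (λ_ (D.lan (D.y A))).hom ≫ nu D A ≫ (ρ_ (D.y (D.P A))).inv :=
  Function.surjInv_eq ((hmp D A) _).2 _

lemma ww_nu : ww D A ≫ (nu D A ▷ mm D A) = (D.c (𝟙 (D.P A))).hom := by
  apply ((D.y_selfExt A) (D.y (D.P A) ≫ mm D A)).1
  dsimp only
  rw [Bicategory.whiskerLeft_comp, ← Category.assoc ((ρ_ (D.y A)).inv), ww_fac]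
  calc w0 D A ≫ D.y A ◁ (nu D A ▷ mm D A)
      = 𝟙 _ ⊗≫ (D.y A ◁ (D.c (𝟙 (D.P A))).hom) ⊗≫
          ((((D.c (D.y A ≫ D.y (D.P A))).hom ≫ D.y A ◁ nu D A) ▷ mm D A)) ⊗≫ 𝟙 _ := by
        dsimp only [w0]; bicategory
    _ = (ρ_ (D.y A)).inv ≫ D.y A ◁ (D.c (𝟙 (D.P A))).hom := by
        rw [nu_fac]; bicategory

lemma T1 : leftZigzag (ww D A) (vv D A) =
    (λ_ (D.lan (D.y A))).hom ≫ (ρ_ (D.lan (D.y A))).inv := by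
  have h : (λ_ (D.lan (D.y A))).inv ≫ (ww D A ▷ D.lan (D.y A) ≫
      (α_ (D.lan (D.y A)) (mm D A) (D.lan (D.y A))).hom ≫ D.lan (D.y A) ◁ vv D A) ≫
      (ρ_ (D.lan (D.y A))).hom = 𝟙 (D.lan (D.y A)) := by
    apply ((D.ext_isLeftExt (D.y A ≫ D.y (D.P A))) (D.lan (D.y A))).1
    dsimp only
    calc (D.c (D.y A ≫ D.y (D.P A))).hom ≫ D.y A ◁ ((λ_ (D.lan (D.y A))).inv ≫
            (ww D A ▷ D.lan (D.y A) ≫ (α_ (D.lan (D.y A)) (mm D A) (D.lan (D.y A))).hom ≫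
              D.lan (D.y A) ◁ vv D A) ≫ (ρ_ (D.lan (D.y A))).hom)
        = (D.c (D.y A ≫ D.y (D.P A))).hom ⊗≫ ((D.y A ◁ ww D A) ▷ D.lan (D.y A)) ⊗≫
            (D.y A ◁ (D.lan (D.y A) ◁ vv D A)) ⊗≫ 𝟙 _ := by
          bicategory
      _ = (D.c (D.y A ≫ D.y (D.P A))).hom ⊗≫
            ((D.y A ◁ (D.c (𝟙 (D.P A))).hom) ▷ D.lan (D.y A)) ⊗≫
            ((D.c (D.y A ≫ D.y (D.P A))).hom ▷ (mm D A ≫ D.lan (D.y A)) ≫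
              (D.y A ≫ D.lan (D.y A)) ◁ vv D A) ⊗≫ 𝟙 _ := by
          rw [whiskerLeft_ww]; dsimp only [w0]; bicategory
      _ = (D.c (D.y A ≫ D.y (D.P A))).hom ⊗≫
            (D.y A ◁ ((((D.c (𝟙 (D.P A))).hom ▷ D.lan (D.y A)) ≫
            (α_ (D.y (D.P A)) (mm D A) (D.lan (D.y A))).hom) ≫ (D.y (D.P A) ◁ vv D A))) ⊗≫
            ((D.c (D.y A ≫ D.y (D.P A))).hom ▷ 𝟙 _) ⊗≫ 𝟙 _ := by
          rw [← whisker_exchange]; bicategory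
      _ = 𝟙 _ ⊗≫ ((D.c (D.y A ≫ D.y (D.P A))).hom ≫ (D.y A ◁ nu D A)) ⊗≫
            ((D.c (D.y A ≫ D.y (D.P A))).hom ▷ 𝟙 _) ⊗≫ 𝟙 _ := by
          rw [vv_fac]; bicategory
      _ = (D.c (D.y A ≫ D.y (D.P A))).hom ≫ D.y A ◁ 𝟙 (D.lan (D.y A)) := by
          rw [nu_fac]; bicategory
  calc leftZigzag (ww D A) (vv D A)
      = (λ_ (D.lan (D.y A))).hom ≫ ((λ_ (D.lan (D.y A))).inv ≫ (ww D A ▷ D.lan (D.y A) ≫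
          (α_ (D.lan (D.y A)) (mm D A) (D.lan (D.y A))).hom ≫ D.lan (D.y A) ◁ vv D A) ≫
          (ρ_ (D.lan (D.y A))).hom) ≫ (ρ_ (D.lan (D.y A))).inv := by
        dsimp only [leftZigzag]; bicategory
    _ = (λ_ (D.lan (D.y A))).hom ≫ (ρ_ (D.lan (D.y A))).inv := by rw [h]; simp

lemma T2 : rightZigzag (ww D A) (vv D A) = (ρ_ (mm D A)).hom ≫ (λ_ (mm D A)).inv := by
  have h : (ρ_ (mm D A)).inv ≫ (mm D A ◁ ww D A ≫
      (α_ (mm D A) (D.lan (D.y A)) (mm D A)).inv ≫ vv D A ▷ mm D A) ≫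
      (λ_ (mm D A)).hom = 𝟙 (mm D A) := by
    apply ((D.ext_isLeftExt (𝟙 (D.P A))) (mm D A)).1
    dsimp only
    calc (D.c (𝟙 (D.P A))).hom ≫ D.y (D.P A) ◁ ((ρ_ (mm D A)).inv ≫ (mm D A ◁ ww D A ≫
            (α_ (mm D A) (D.lan (D.y A)) (mm D A)).inv ≫ vv D A ▷ mm D A) ≫ (λ_ (mm D A)).hom)
        = 𝟙 _ ⊗≫ ((D.c (𝟙 (D.P A))).hom ▷ 𝟙 (D.P A) ≫
            (D.y (D.P A) ≫ mm D A) ◁ ww D A) ⊗≫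
            (D.y (D.P A) ◁ (vv D A ▷ mm D A)) ⊗≫ 𝟙 _ := by
          bicategory
      _ = 𝟙 _ ⊗≫ ww D A ⊗≫ (((((D.c (𝟙 (D.P A))).hom ▷ D.lan (D.y A)) ≫
            (α_ (D.y (D.P A)) (mm D A) (D.lan (D.y A))).hom) ≫ (D.y (D.P A) ◁ vv D A)) ▷ mm D A)
            ⊗≫ 𝟙 _ := by
          rw [← whisker_exchange]; bicategory
      _ = 𝟙 _ ⊗≫ (ww D A ≫ (nu D A ▷ mm D A)) ⊗≫ 𝟙 _ := by
          rw [vv_fac]; bicategory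
      _ = (D.c (𝟙 (D.P A))).hom ≫ D.y (D.P A) ◁ 𝟙 (mm D A) := by
          rw [ww_nu]; bicategory
  calc rightZigzag (ww D A) (vv D A)
      = (ρ_ (mm D A)).hom ≫ ((ρ_ (mm D A)).inv ≫ (mm D A ◁ ww D A ≫
          (α_ (mm D A) (D.lan (D.y A)) (mm D A)).inv ≫ vv D A ▷ mm D A) ≫
          (λ_ (mm D A)).hom) ≫ (λ_ (mm D A)).inv := by
        dsimp only [rightZigzag]; bicategory
    _ = (ρ_ (mm D A)).hom ≫ (λ_ (mm D A)).inv := by rw [h]; simp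

/-- the adjunction `P y_A ⊣ m` -/
noncomputable def adjPm : Adjunction (D.lan (D.y A)) (mm D A) where
  unit := ww D A
  counit := vv D A
  left_triangle := T1 D A
  right_triangle := T2 D A

end KZ4

section KZ5

variable (D : KZDoctrine 𝒞) {A B : 𝒞} (L : A ⟶ B) (res : D.P B ⟶ D.P A)
  (adj : Adjunction (D.lan L) res)

noncomputable def phiIso : (D.y B ≫ res) ≅ ((D.y B ≫ res) ≫ D.y (D.P A)) ≫ mm D A :=
  (ρ_ (D.y B ≫ res)).symm ≪≫ whiskerLeftIso (D.y B ≫ res) (D.c (𝟙 (D.P A))) ≪≫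
    (α_ (D.y B ≫ res) (D.y (D.P A)) (mm D A)).symm

lemma hK : ExhibitsLeftExt (D.y B) (D.y B ≫ res) (D.lan (D.y B ≫ res) ≫ mm D A)
    ((phiIso D res).hom ≫ (((D.c ((D.y B ≫ res) ≫ D.y (D.P A))).hom ▷ mm D A) ≫
      (α_ (D.y B) (D.lan (D.y B ≫ res)) (mm D A)).hom)) :=
  ExhibitsLeftExt.ofIso
    (D.ext_respects ((D.y B ≫ res) ≫ D.y (D.P A)) (𝟙 (D.P A))) (phiIso D res)

noncomputable def kIso : D.ext (D.y B ≫ res) ≅ D.lan (D.y B ≫ res) ≫ mm D A :=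
  ExhibitsLeftExt.uniq (D.ext_isLeftExt (D.y B ≫ res)) (hK D res)

lemma kIso_fac : (D.c (D.y B ≫ res)).hom ≫ D.y B ◁ (kIso D res).hom =
    (phiIso D res).hom ≫ (((D.c ((D.y B ≫ res) ≫ D.y (D.P A))).hom ▷ mm D A) ≫
      (α_ (D.y B) (D.lan (D.y B ≫ res)) (mm D A)).hom) :=
  ExhibitsLeftExt.uniq_fac (D.ext_isLeftExt (D.y B ≫ res)) (hK D res)

noncomputable def jIso : res ≅ D.lan (D.y B ≫ res) ≫ mm D A :=
  sigmaIso D L res adj ≪≫ kIso D res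

lemma whiskerLeft_j : D.y B ◁ (jIso D L res adj).hom =
    (ρ_ (D.y B ≫ res)).inv ≫ ((D.y B ≫ res) ◁ (D.c (𝟙 (D.P A))).hom) ≫
    (α_ (D.y B ≫ res) (D.y (D.P A)) (mm D A)).inv ≫
    ((D.c ((D.y B ≫ res) ≫ D.y (D.P A))).hom ▷ mm D A) ≫
    (α_ (D.y B) (D.lan (D.y B ≫ res)) (mm D A)).hom := by
  have h1 : (jIso D L res adj).hom = sigma0 D L res adj ≫ (kIso D res).hom := rfl
  rw [h1, Bicategory.whiskerLeft_comp, whiskerLeft_sigma0, kIso_fac]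
  dsimp only [phiIso, Iso.trans_hom, Iso.symm_hom, whiskerLeftIso_hom]
  simp only [Category.assoc]
  rfl

lemma eta'_fac : (D.c (D.y A ≫ D.y (D.P A))).hom ≫
    D.y A ◁ (D.map2 (theta D L res adj) ≫ D.comp2 L (D.y B ≫ res)) =
    (theta D L res adj ▷ D.y (D.P A)) ≫ (α_ L (D.y B ≫ res) (D.y (D.P A))).hom ≫
      (L ◁ (D.c ((D.y B ≫ res) ≫ D.y (D.P A))).hom) ≫
      (α_ L (D.y B) (D.lan (D.y B ≫ res))).inv ≫
      ((D.c (L ≫ D.y B)).hom ▷ D.lan (D.y B ≫ res)) ≫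
      (α_ (D.y A) (D.lan L) (D.lan (D.y B ≫ res))).hom := by
  rw [Bicategory.whiskerLeft_comp, ← Category.assoc, map2_fac, Category.assoc, comp2_fac]

lemma key : ww D A ≫ ((D.map2 (theta D L res adj) ≫ D.comp2 L (D.y B ≫ res)) ▷ mm D A) ≫
    (α_ (D.lan L) (D.lan (D.y B ≫ res)) (mm D A)).hom =
    adj.unit ≫ (D.lan L ◁ (jIso D L res adj).hom) := by
  apply ((D.y_selfExt A) (D.lan L ≫ (D.lan (D.y B ≫ res) ≫ mm D A))).1
  dsimp only
  calc (ρ_ (D.y A)).inv ≫ D.y A ◁ (ww D A ≫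
          ((D.map2 (theta D L res adj) ≫ D.comp2 L (D.y B ≫ res)) ▷ mm D A) ≫
          (α_ (D.lan L) (D.lan (D.y B ≫ res)) (mm D A)).hom)
      = 𝟙 _ ⊗≫ (D.y A ◁ (D.c (𝟙 (D.P A))).hom) ⊗≫
          (((D.c (D.y A ≫ D.y (D.P A))).hom ≫
            D.y A ◁ (D.map2 (theta D L res adj) ≫ D.comp2 L (D.y B ≫ res))) ▷ mm D A) ⊗≫
          𝟙 _ := by
        simp only [Bicategory.whiskerLeft_comp]
        rw [whiskerLeft_ww]; dsimp only [w0]; bicategory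
    _ = 𝟙 _ ⊗≫ (D.y A ◁ (D.c (𝟙 (D.P A))).hom ≫
          theta D L res adj ▷ (D.y (D.P A) ≫ mm D A)) ⊗≫
          (L ◁ ((D.c ((D.y B ≫ res) ≫ D.y (D.P A))).hom ▷ mm D A)) ⊗≫
          ((D.c (L ≫ D.y B)).hom ▷ (D.lan (D.y B ≫ res) ≫ mm D A)) ⊗≫ 𝟙 _ := by
        rw [eta'_fac]; bicategory
    _ = 𝟙 _ ⊗≫ theta D L res adj ⊗≫
          (L ◁ ((ρ_ (D.y B ≫ res)).inv ≫ ((D.y B ≫ res) ◁ (D.c (𝟙 (D.P A))).hom) ≫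
            (α_ (D.y B ≫ res) (D.y (D.P A)) (mm D A)).inv ≫
            ((D.c ((D.y B ≫ res) ≫ D.y (D.P A))).hom ▷ mm D A) ≫
            (α_ (D.y B) (D.lan (D.y B ≫ res)) (mm D A)).hom)) ⊗≫
          ((D.c (L ≫ D.y B)).hom ▷ (D.lan (D.y B ≫ res) ≫ mm D A)) ⊗≫ 𝟙 _ := by
        rw [whisker_exchange]; bicategory
    _ = 𝟙 _ ⊗≫ (D.y A ◁ adj.unit) ⊗≫
          (((D.c (L ≫ D.y B)).inv ▷ res) ≫ ((L ≫ D.y B) ◁ (jIso D L res adj).hom)) ⊗≫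
          ((D.c (L ≫ D.y B)).hom ▷ (D.lan (D.y B ≫ res) ≫ mm D A)) ⊗≫ 𝟙 _ := by
        rw [← whiskerLeft_j D L res adj]; dsimp only [theta]; bicategory
    _ = 𝟙 _ ⊗≫ (D.y A ◁ adj.unit) ⊗≫
          ((D.y A ≫ D.lan L) ◁ (jIso D L res adj).hom) ⊗≫
          (((D.c (L ≫ D.y B)).inv ≫ (D.c (L ≫ D.y B)).hom) ▷
            (D.lan (D.y B ≫ res) ≫ mm D A)) ⊗≫ 𝟙 _ := by
        rw [← whisker_exchange]; bicategory
    _ = (ρ_ (D.y A)).inv ≫ D.y A ◁ (adj.unit ≫ D.lan L ◁ (jIso D L res adj).hom) := by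
        rw [Iso.inv_hom_id]; bicategory

end KZ5

end KZProof

open KZProof in
theorem stmt11 (D : KZDoctrine 𝒞) {A B : 𝒞} (L : A ⟶ B)
    (res : D.P B ⟶ D.P A) (adj : Bicategory.Adjunction (D.lan L) res) :
    ExhibitsAbsLeftLift (D.lan (D.y B ≫ res)) (D.lan (D.y A)) (D.lan L)
      (D.map2 ((ρ_ (D.y A)).inv ≫ (D.y A ◁ adj.unit) ≫
          (α_ (D.y A) (D.lan L) res).inv ≫ ((D.c (L ≫ D.y B)).inv ▷ res) ≫
          (α_ L (D.y B) res).hom) ≫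
        D.comp2 L (D.y B ≫ res)) := by
  have hθ : ((ρ_ (D.y A)).inv ≫ (D.y A ◁ adj.unit) ≫ (α_ (D.y A) (D.lan L) res).inv ≫
      ((D.c (L ≫ D.y B)).inv ▷ res) ≫ (α_ L (D.y B) res).hom) = theta D L res adj := rfl
  rw [hθ]
  dsimp only [ExhibitsAbsLeftLift, ExhibitsLeftLift]
  intro x F K
  have hg : Function.Bijective (fun δ : F ≫ D.lan L ⟶ K =>
      ((ρ_ F).inv ≫ F ◁ adj.unit ≫ (α_ F (D.lan L) res).inv ≫ δ ▷ res) ≫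
        (K ◁ (jIso D L res adj).hom) ≫
        (α_ K (D.lan (D.y B ≫ res)) (mm D A)).inv) := by
    have e2 : Function.Bijective (fun t : F ⟶ K ≫ res =>
        t ≫ (K ◁ (jIso D L res adj).hom) ≫ (α_ K (D.lan (D.y B ≫ res)) (mm D A)).inv) :=
      (Equiv.mk
        (fun t : F ⟶ K ≫ res =>
          t ≫ (K ◁ (jIso D L res adj).hom) ≫ (α_ K (D.lan (D.y B ≫ res)) (mm D A)).inv)
        (fun s => s ≫ (α_ K (D.lan (D.y B ≫ res)) (mm D A)).hom ≫
          (K ◁ (jIso D L res adj).inv))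
        (fun t => by simp) (fun s => by simp)).bijective
    exact e2.comp (mateEquiv adj F K).bijective
  have hcomp : ∀ δ : F ≫ D.lan L ⟶ K,
      mateEquiv (adjPm D A) F (K ≫ D.lan (D.y B ≫ res))
        ((F ◁ (D.map2 (theta D L res adj) ≫ D.comp2 L (D.y B ≫ res)) ≫
          (α_ F (D.lan L) (D.lan (D.y B ≫ res))).inv) ≫ δ ▷ D.lan (D.y B ≫ res)) =
      ((ρ_ F).inv ≫ F ◁ adj.unit ≫ (α_ F (D.lan L) res).inv ≫ δ ▷ res) ≫
        (K ◁ (jIso D L res adj).hom) ≫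
        (α_ K (D.lan (D.y B ≫ res)) (mm D A)).inv := by
    intro δ
    show (ρ_ F).inv ≫ F ◁ ww D A ≫ (α_ F (D.lan (D.y A)) (mm D A)).inv ≫
        ((F ◁ (D.map2 (theta D L res adj) ≫ D.comp2 L (D.y B ≫ res)) ≫
          (α_ F (D.lan L) (D.lan (D.y B ≫ res))).inv) ≫
            δ ▷ D.lan (D.y B ≫ res)) ▷ mm D A = _
    calc (ρ_ F).inv ≫ F ◁ ww D A ≫ (α_ F (D.lan (D.y A)) (mm D A)).inv ≫
            ((F ◁ (D.map2 (theta D L res adj) ≫ D.comp2 L (D.y B ≫ res)) ≫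
              (α_ F (D.lan L) (D.lan (D.y B ≫ res))).inv) ≫
                δ ▷ D.lan (D.y B ≫ res)) ▷ mm D A
        = 𝟙 _ ⊗≫ (F ◁ (ww D A ≫
            ((D.map2 (theta D L res adj) ≫ D.comp2 L (D.y B ≫ res)) ▷ mm D A) ≫
            (α_ (D.lan L) (D.lan (D.y B ≫ res)) (mm D A)).hom)) ⊗≫
            (δ ▷ (D.lan (D.y B ≫ res) ≫ mm D A)) ⊗≫ 𝟙 _ := by
          bicategory
      _ = 𝟙 _ ⊗≫ (F ◁ (adj.unit ≫ D.lan L ◁ (jIso D L res adj).hom)) ⊗≫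
            (δ ▷ (D.lan (D.y B ≫ res) ≫ mm D A)) ⊗≫ 𝟙 _ := by
          rw [key]
      _ = 𝟙 _ ⊗≫ (F ◁ adj.unit) ⊗≫
            ((F ≫ D.lan L) ◁ (jIso D L res adj).hom ≫
              δ ▷ (D.lan (D.y B ≫ res) ≫ mm D A)) ⊗≫ 𝟙 _ := by
          bicategory
      _ = 𝟙 _ ⊗≫ (F ◁ adj.unit) ⊗≫
            (δ ▷ res ≫ K ◁ (jIso D L res adj).hom) ⊗≫ 𝟙 _ := by
          rw [whisker_exchange]
      _ = ((ρ_ F).inv ≫ F ◁ adj.unit ≫ (α_ F (D.lan L) res).inv ≫ δ ▷ res) ≫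
            (K ◁ (jIso D L res adj).hom) ≫
            (α_ K (D.lan (D.y B ≫ res)) (mm D A)).inv := by
          bicategory
  have hfun : (fun δ : F ≫ D.lan L ⟶ K =>
      (F ◁ (D.map2 (theta D L res adj) ≫ D.comp2 L (D.y B ≫ res)) ≫
        (α_ F (D.lan L) (D.lan (D.y B ≫ res))).inv) ≫ δ ▷ D.lan (D.y B ≫ res))
      = fun δ => (mateEquiv (adjPm D A) F (K ≫ D.lan (D.y B ≫ res))).symm
          (((ρ_ F).inv ≫ F ◁ adj.unit ≫ (α_ F (D.lan L) res).inv ≫ δ ▷ res) ≫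
            (K ◁ (jIso D L res adj).hom) ≫
            (α_ K (D.lan (D.y B ≫ res)) (mm D A)).inv) := by
    funext δ
    apply (mateEquiv (adjPm D A) F (K ≫ D.lan (D.y B ≫ res))).injective
    rw [Equiv.apply_symm_apply]
    exact hcomp δ
  rw [hfun]
  exact ((mateEquiv (adjPm D A) F (K ≫ D.lan (D.y B ≫ res))).symm.bijective).comp hg
end

section
/- Let (P, y) be a KZ doctrine on a 2-category 𝒞 and let L : A ⟶ B be a P-admissible 1-cell with left extension (R_L, φ_L) of y_A along L. Then the exhibiting 2-cell φ_L is invertible if and only if PL := lan_L is fully faithful (equivalently, if and only if the unit of the adjunction PL ⊣ res_L is invertible). -/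
open CategoryTheory Bicategory

universe w v u

variable {𝒞 : Type u} [Bicategory.{w, v} 𝒞]

section KZAux

/-! ### Auxiliary lemmas for `stmt12`. -/

/-- A comparison 2-cell between two left extensions, across an invertible 2-cell between
the extended 1-cells, is itself invertible. -/
lemma kz_isIso_of_compare {a b c : 𝒞} {L : a ⟶ b} {I I' : a ⟶ c} {R R' : b ⟶ c}
    {η : I ⟶ L ≫ R} {η' : I' ⟶ L ≫ R'}
    (hη : ExhibitsLeftExt L I R η) (hη' : ExhibitsLeftExt L I' R' η')
    (t : I ≅ I') {σ : R ⟶ R'} (hσ : η ≫ L ◁ σ = t.hom ≫ η') : IsIso σ := by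
  obtain ⟨σ', hσ'⟩ := (hη' R).2 (t.inv ≫ η)
  simp only at hσ'
  refine ⟨σ', ?_, ?_⟩
  · apply (hη R).1
    show η ≫ L ◁ (σ ≫ σ') = η ≫ L ◁ 𝟙 R
    rw [Bicategory.whiskerLeft_id, Category.comp_id, Bicategory.whiskerLeft_comp,
      ← Category.assoc, hσ, Category.assoc, hσ', Iso.hom_inv_id_assoc]
  · apply (hη' R').1
    show η' ≫ L ◁ (σ' ≫ σ) = η' ≫ L ◁ 𝟙 R'
    rw [Bicategory.whiskerLeft_id, Category.comp_id, Bicategory.whiskerLeft_comp,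
      ← Category.assoc, hσ', Category.assoc, hσ, Iso.inv_hom_id_assoc]

/-- If the unit of a (one-sided) adjunction is invertible, the left adjoint is
fully faithful. Only the left triangle identity is needed. -/
lemma kz_ff_of_unit {a b : 𝒞} {f : a ⟶ b} {g : b ⟶ a} (u : 𝟙 a ⟶ f ≫ g) (ε' : g ≫ f ⟶ 𝟙 b)
    (hu : IsIso u)
    (T1 : u ▷ f ⊗≫ f ◁ ε' = (λ_ f).hom ≫ (ρ_ f).inv) : FullyFaithful1Cell f := by
  intro x p q
  rw [Function.bijective_iff_has_inverse]
  refine ⟨fun τ => (ρ_ p).inv ≫ p ◁ u ⊗≫ τ ▷ g ⊗≫ q ◁ inv u ≫ (ρ_ q).hom, ?_, ?_⟩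
  · intro σ
    calc (ρ_ p).inv ≫ p ◁ u ⊗≫ (σ ▷ f) ▷ g ⊗≫ q ◁ inv u ≫ (ρ_ q).hom
        = (ρ_ p).inv ≫ (p ◁ u ≫ σ ▷ (f ≫ g)) ⊗≫ (q ◁ inv u ≫ (ρ_ q).hom) := by
          bicategory
      _ = (ρ_ p).inv ≫ (σ ▷ 𝟙 a ≫ q ◁ u) ⊗≫ (q ◁ inv u ≫ (ρ_ q).hom) := by
          rw [whisker_exchange]
      _ = σ ≫ (ρ_ q).inv ≫ q ◁ (u ≫ inv u) ≫ (ρ_ q).hom := by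
          bicategory
      _ = σ := by rw [IsIso.hom_inv_id]; simp
  · intro τ
    calc ((ρ_ p).inv ≫ p ◁ u ⊗≫ τ ▷ g ⊗≫ q ◁ inv u ≫ (ρ_ q).hom) ▷ f
        = 𝟙 _ ⊗≫ (p ◁ u) ▷ f ⊗≫ (τ ▷ g) ▷ f ⊗≫ (q ◁ inv u) ▷ f ⊗≫ 𝟙 _ := by
          bicategory
      _ = 𝟙 _ ⊗≫ (p ◁ u) ▷ f ⊗≫ (τ ▷ g) ▷ f ⊗≫ (q ◁ inv u) ▷ f ⊗≫
            q ◁ (u ▷ f ⊗≫ f ◁ ε') ⊗≫ 𝟙 _ := by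
          rw [T1]; bicategory
      _ = 𝟙 _ ⊗≫ (p ◁ u) ▷ f ⊗≫ (τ ▷ g) ▷ f ⊗≫ q ◁ ((inv u ≫ u) ▷ f) ⊗≫
            q ◁ (f ◁ ε') ⊗≫ 𝟙 _ := by
          bicategory
      _ = 𝟙 _ ⊗≫ (p ◁ u) ▷ f ⊗≫ (τ ▷ (g ≫ f) ≫ (q ≫ f) ◁ ε') ⊗≫ 𝟙 _ := by
          rw [IsIso.inv_hom_id]; bicategory
      _ = 𝟙 _ ⊗≫ (p ◁ u) ▷ f ⊗≫ ((p ≫ f) ◁ ε' ≫ τ ▷ 𝟙 b) ⊗≫ 𝟙 _ := by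
          rw [← whisker_exchange]
      _ = 𝟙 _ ⊗≫ p ◁ (u ▷ f ⊗≫ f ◁ ε') ⊗≫ τ ▷ 𝟙 b ⊗≫ 𝟙 _ := by
          bicategory
      _ = 𝟙 _ ⊗≫ τ ▷ 𝟙 b ⊗≫ 𝟙 _ := by rw [T1]; bicategory
      _ = τ := by bicategory

/-- If the left adjoint is fully faithful, the unit of the adjunction is invertible. -/
lemma kz_unit_iso_of_ff {a b : 𝒞} {f : a ⟶ b} {g : b ⟶ a} (u : 𝟙 a ⟶ f ≫ g) (ε' : g ≫ f ⟶ 𝟙 b)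
    (T1 : u ▷ f ⊗≫ f ◁ ε' = (λ_ f).hom ≫ (ρ_ f).inv)
    (T2 : g ◁ u ⊗≫ ε' ▷ g = (ρ_ g).hom ≫ (λ_ g).inv)
    (hf : FullyFaithful1Cell f) : IsIso u := by
  obtain ⟨v, hv⟩ := (hf (f ≫ g) (𝟙 a)).2 ((α_ f g f).hom ≫ f ◁ ε' ≫ (ρ_ f).hom ≫ (λ_ f).inv)
  simp only at hv
  refine ⟨v, ?_, ?_⟩
  · apply (hf (𝟙 a) (𝟙 a)).1
    show (u ≫ v) ▷ f = 𝟙 (𝟙 a) ▷ f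
    calc (u ≫ v) ▷ f = u ▷ f ≫ v ▷ f := by rw [Bicategory.comp_whiskerRight]
      _ = (u ▷ f ⊗≫ f ◁ ε') ⊗≫ 𝟙 _ := by rw [hv]; bicategory
      _ = ((λ_ f).hom ≫ (ρ_ f).inv) ⊗≫ 𝟙 _ := by rw [T1]
      _ = 𝟙 (𝟙 a) ▷ f := by bicategory
  · calc v ≫ u = 𝟙 _ ⊗≫ ((f ≫ g) ◁ u ≫ v ▷ (f ≫ g)) ⊗≫ 𝟙 _ := by
          rw [whisker_exchange]; bicategory
      _ = 𝟙 _ ⊗≫ f ◁ (g ◁ u) ⊗≫ (v ▷ f) ▷ g ⊗≫ 𝟙 _ := by bicategory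
      _ = 𝟙 _ ⊗≫ f ◁ (g ◁ u) ⊗≫
            ((α_ f g f).hom ≫ f ◁ ε' ≫ (ρ_ f).hom ≫ (λ_ f).inv) ▷ g ⊗≫ 𝟙 _ := by
          rw [hv]
      _ = 𝟙 _ ⊗≫ f ◁ (g ◁ u ⊗≫ ε' ▷ g) ⊗≫ 𝟙 _ := by bicategory
      _ = 𝟙 _ ⊗≫ f ◁ ((ρ_ g).hom ≫ (λ_ g).inv) ⊗≫ 𝟙 _ := by rw [T2]
      _ = 𝟙 (f ≫ g) := by bicategory

section Triangle

variable {A B PA PB : 𝒞} {L : A ⟶ B} {yA : A ⟶ PA} {yB : B ⟶ PB}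
  {PL : PA ⟶ PB} {res : PB ⟶ PA} {RL : B ⟶ PA}
  {φL : yA ⟶ L ≫ RL} {c : L ≫ yB ≅ yA ≫ PL} {cR : RL ≅ yB ≫ res}
  {θ : RL ≫ PL ⟶ yB} {ε' : res ≫ PL ⟶ 𝟙 PB} {u : 𝟙 PA ⟶ PL ≫ res}

/-- Pasting computation for the first (left) triangle identity. -/
lemma kz_T1_paste
    (E1 : ((φL ▷ PL) ≫ (α_ L RL PL).hom) ≫ L ◁ θ = c.inv)
    (E2 : ((cR.hom ▷ PL) ≫ (α_ yB res PL).hom) ≫ yB ◁ ε' = θ ≫ (ρ_ yB).inv)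
    (E3 : (ρ_ yA).inv ≫ yA ◁ u
        = φL ≫ L ◁ cR.hom ≫ (α_ L yB res).inv ≫ (c.hom ▷ res) ≫ (α_ yA PL res).hom) :
    c.hom ≫ yA ◁ ((λ_ PL).inv ≫ (u ▷ PL ⊗≫ PL ◁ ε') ≫ (ρ_ PL).hom)
        = c.hom ≫ yA ◁ 𝟙 PL := by
  calc c.hom ≫ yA ◁ ((λ_ PL).inv ≫ (u ▷ PL ⊗≫ PL ◁ ε') ≫ (ρ_ PL).hom)
      = c.hom ⊗≫ (((ρ_ yA).inv ≫ yA ◁ u) ▷ PL) ⊗≫ yA ◁ PL ◁ ε' ⊗≫ 𝟙 _ := by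
        bicategory
    _ = c.hom ⊗≫
          ((φL ≫ L ◁ cR.hom ≫ (α_ L yB res).inv ≫ (c.hom ▷ res) ≫ (α_ yA PL res).hom) ▷ PL) ⊗≫
          yA ◁ PL ◁ ε' ⊗≫ 𝟙 _ := by rw [E3]
    _ = c.hom ⊗≫ φL ▷ PL ⊗≫ (L ◁ cR.hom) ▷ PL ⊗≫
          (c.hom ▷ (res ≫ PL) ≫ (yA ≫ PL) ◁ ε') ⊗≫ 𝟙 _ := by bicategory
    _ = c.hom ⊗≫ φL ▷ PL ⊗≫ (L ◁ cR.hom) ▷ PL ⊗≫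
          ((L ≫ yB) ◁ ε' ≫ c.hom ▷ 𝟙 _) ⊗≫ 𝟙 _ := by rw [← whisker_exchange]
    _ = c.hom ⊗≫ φL ▷ PL ⊗≫
          L ◁ (((cR.hom ▷ PL) ≫ (α_ yB res PL).hom) ≫ yB ◁ ε') ⊗≫ c.hom := by
        bicategory
    _ = c.hom ⊗≫ φL ▷ PL ⊗≫ L ◁ (θ ≫ (ρ_ yB).inv) ⊗≫ c.hom := by rw [E2]
    _ = c.hom ≫ ((((φL ▷ PL) ≫ (α_ L RL PL).hom) ≫ L ◁ θ) ≫ c.hom) := by bicategory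
    _ = c.hom := by rw [E1, Iso.inv_hom_id, Category.comp_id]
    _ = c.hom ≫ yA ◁ 𝟙 PL := by simp

/-- First pasting computation for the second (right) triangle identity. -/
lemma kz_T2_paste1
    (E2 : ((cR.hom ▷ PL) ≫ (α_ yB res PL).hom) ≫ yB ◁ ε' = θ ≫ (ρ_ yB).inv) :
    cR.hom ≫ yB ◁ ((ρ_ res).inv ≫ (res ◁ u ⊗≫ ε' ▷ res) ≫ (λ_ res).hom)
      = 𝟙 RL ⊗≫ RL ◁ u ⊗≫ θ ▷ res := by
  calc cR.hom ≫ yB ◁ ((ρ_ res).inv ≫ (res ◁ u ⊗≫ ε' ▷ res) ≫ (λ_ res).hom)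
      = 𝟙 _ ⊗≫ (cR.hom ▷ 𝟙 PA ≫ (yB ≫ res) ◁ u) ⊗≫ yB ◁ (ε' ▷ res) ⊗≫ 𝟙 _ := by
        bicategory
    _ = 𝟙 _ ⊗≫ (RL ◁ u ≫ cR.hom ▷ (PL ≫ res)) ⊗≫ yB ◁ (ε' ▷ res) ⊗≫ 𝟙 _ := by
        rw [whisker_exchange]
    _ = 𝟙 _ ⊗≫ RL ◁ u ⊗≫
          (((((cR.hom ▷ PL) ≫ (α_ yB res PL).hom) ≫ yB ◁ ε')) ▷ res) ⊗≫ 𝟙 _ := by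
        bicategory
    _ = 𝟙 _ ⊗≫ RL ◁ u ⊗≫ ((θ ≫ (ρ_ yB).inv) ▷ res) ⊗≫ 𝟙 _ := by rw [E2]
    _ = 𝟙 RL ⊗≫ RL ◁ u ⊗≫ θ ▷ res := by bicategory

/-- Second pasting computation for the second (right) triangle identity. -/
lemma kz_T2_paste2
    (E1 : ((φL ▷ PL) ≫ (α_ L RL PL).hom) ≫ L ◁ θ = c.inv)
    (E3 : (ρ_ yA).inv ≫ yA ◁ u
        = φL ≫ L ◁ cR.hom ≫ (α_ L yB res).inv ≫ (c.hom ▷ res) ≫ (α_ yA PL res).hom) :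
    φL ≫ L ◁ (𝟙 RL ⊗≫ RL ◁ u ⊗≫ θ ▷ res) = φL ≫ L ◁ cR.hom := by
  calc φL ≫ L ◁ (𝟙 RL ⊗≫ RL ◁ u ⊗≫ θ ▷ res)
      = 𝟙 _ ⊗≫ (φL ▷ 𝟙 PA ≫ (L ≫ RL) ◁ u) ⊗≫ L ◁ (θ ▷ res) ⊗≫ 𝟙 _ := by
        bicategory
    _ = 𝟙 _ ⊗≫ (yA ◁ u ≫ φL ▷ (PL ≫ res)) ⊗≫ L ◁ (θ ▷ res) ⊗≫ 𝟙 _ := by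
        rw [whisker_exchange]
    _ = 𝟙 _ ⊗≫ ((ρ_ yA).inv ≫ yA ◁ u) ⊗≫ φL ▷ (PL ≫ res) ⊗≫ L ◁ (θ ▷ res) ⊗≫ 𝟙 _ := by
        bicategory
    _ = 𝟙 _ ⊗≫
          (φL ≫ L ◁ cR.hom ≫ (α_ L yB res).inv ≫ (c.hom ▷ res) ≫ (α_ yA PL res).hom) ⊗≫
          φL ▷ (PL ≫ res) ⊗≫ L ◁ (θ ▷ res) ⊗≫ 𝟙 _ := by rw [E3]
    _ = φL ≫ L ◁ cR.hom ⊗≫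
          ((c.hom ≫ (((φL ▷ PL) ≫ (α_ L RL PL).hom) ≫ L ◁ θ)) ▷ res) ⊗≫ 𝟙 _ := by
        bicategory
    _ = φL ≫ L ◁ cR.hom ⊗≫ ((c.hom ≫ c.inv) ▷ res) ⊗≫ 𝟙 _ := by rw [E1]
    _ = φL ≫ L ◁ cR.hom := by rw [Iso.hom_inv_id]; bicategory

end Triangle

end KZAux

/-- For `P`-admissible `L` with left extension `(R_L, φ_L)`, the 2-cell
`φ_L` is invertible iff `PL := lan L` is fully faithful. -/
theorem stmt12 (D : KZDoctrine 𝒞) {A B : 𝒞} (L : A ⟶ B)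
    (RL : B ⟶ D.P A) (φL : D.y A ⟶ L ≫ RL) (hL : AdmissibleData D L RL φL) :
    IsIso φL ↔ FullyFaithful1Cell (D.lan L) := by
  obtain ⟨hext, hresp⟩ := hL
  have hco : PCocomplete D (D.P B) := by
    intro A' G
    exact ⟨D.ext G, D.c G, D.ext_isLeftExt G, fun {A''} F => D.ext_respects F G⟩
  have hψ : ExhibitsLeftExt L (D.y A ≫ D.lan L) (RL ≫ D.lan L)
      ((φL ▷ D.lan L) ≫ (α_ L RL (D.lan L)).hom) :=
    hresp hco (L ≫ D.y B) (D.lan L) (D.c (L ≫ D.y B)) (D.ext_isLeftExt (L ≫ D.y B))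
  obtain ⟨θ, hθ⟩ := (hψ (D.y B)).2 (D.c (L ≫ D.y B)).inv
  simp only at hθ
  have hcp : ExhibitsLeftExt (D.y B) (RL ≫ D.lan L) (D.ext RL ≫ D.lan L)
      (((D.c RL).hom ▷ D.lan L) ≫ (α_ (D.y B) (D.ext RL) (D.lan L)).hom) :=
    D.ext_respects RL (L ≫ D.y B)
  obtain ⟨ε', hε⟩ := (hcp (𝟙 (D.P B))).2 (θ ≫ (ρ_ (D.y B)).inv)
  simp only at hε
  obtain ⟨u, hu⟩ := (D.y_selfExt A (D.lan L ≫ D.ext RL)).2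
    (φL ≫ L ◁ (D.c RL).hom ≫ (α_ L (D.y B) (D.ext RL)).inv ≫
      ((D.c (L ≫ D.y B)).hom ▷ D.ext RL) ≫ (α_ (D.y A) (D.lan L) (D.ext RL)).hom)
  simp only at hu
  -- the two triangle identities for the adjunction `lan L ⊣ ext RL`
  have key1 : (λ_ (D.lan L)).inv ≫ (u ▷ D.lan L ⊗≫ D.lan L ◁ ε') ≫ (ρ_ (D.lan L)).hom
      = 𝟙 (D.lan L) :=
    (D.ext_isLeftExt (L ≫ D.y B) (D.lan L)).1 (kz_T1_paste hθ hε hu)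
  have T1 : u ▷ D.lan L ⊗≫ D.lan L ◁ ε' = (λ_ (D.lan L)).hom ≫ (ρ_ (D.lan L)).inv := by
    calc u ▷ D.lan L ⊗≫ D.lan L ◁ ε'
        = (λ_ (D.lan L)).hom ≫
            ((λ_ (D.lan L)).inv ≫ (u ▷ D.lan L ⊗≫ D.lan L ◁ ε') ≫ (ρ_ (D.lan L)).hom) ≫
            (ρ_ (D.lan L)).inv := by simp
      _ = (λ_ (D.lan L)).hom ≫ (ρ_ (D.lan L)).inv := by rw [key1, Category.id_comp]
  have key2' : (𝟙 RL ⊗≫ RL ◁ u ⊗≫ θ ▷ D.ext RL : RL ⟶ D.y B ≫ D.ext RL) = (D.c RL).hom :=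
    (hext (D.y B ≫ D.ext RL)).1 (kz_T2_paste2 hθ hu)
  have key2 : (ρ_ (D.ext RL)).inv ≫ (D.ext RL ◁ u ⊗≫ ε' ▷ D.ext RL) ≫ (λ_ (D.ext RL)).hom
      = 𝟙 (D.ext RL) :=
    (D.ext_isLeftExt RL (D.ext RL)).1
      (show (D.c RL).hom ≫ D.y B ◁
          ((ρ_ (D.ext RL)).inv ≫ (D.ext RL ◁ u ⊗≫ ε' ▷ D.ext RL) ≫ (λ_ (D.ext RL)).hom)
          = (D.c RL).hom ≫ D.y B ◁ 𝟙 (D.ext RL) by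
        rw [kz_T2_paste1 hε, key2']; simp)
  have T2 : D.ext RL ◁ u ⊗≫ ε' ▷ D.ext RL = (ρ_ (D.ext RL)).hom ≫ (λ_ (D.ext RL)).inv := by
    calc D.ext RL ◁ u ⊗≫ ε' ▷ D.ext RL
        = (ρ_ (D.ext RL)).hom ≫
            ((ρ_ (D.ext RL)).inv ≫ (D.ext RL ◁ u ⊗≫ ε' ▷ D.ext RL) ≫ (λ_ (D.ext RL)).hom) ≫
            (λ_ (D.ext RL)).inv := by simp
      _ = (ρ_ (D.ext RL)).hom ≫ (λ_ (D.ext RL)).inv := by rw [key2, Category.id_comp]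
  constructor
  · intro hφ
    haveI := hφ
    have hχ : ExhibitsLeftExt (D.y A) ((L ≫ D.y B) ≫ D.ext RL) (D.lan L ≫ D.ext RL)
        (((D.c (L ≫ D.y B)).hom ▷ D.ext RL) ≫ (α_ (D.y A) (D.lan L) (D.ext RL)).hom) :=
      D.ext_respects (L ≫ D.y B) RL
    have hiso : IsIso u := by
      refine kz_isIso_of_compare (D.y_selfExt A) hχ
        (asIso (φL ≫ L ◁ (D.c RL).hom ≫ (α_ L (D.y B) (D.ext RL)).inv)) ?_
      rw [hu]
      simp
    intro x p q
    exact kz_ff_of_unit u ε' hiso T1 p q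
  · intro hff
    haveI hiso : IsIso u := kz_unit_iso_of_ff u ε' T1 T2 hff
    haveI h2 : IsIso (φL ≫ L ◁ (D.c RL).hom ≫ (α_ L (D.y B) (D.ext RL)).inv ≫
        ((D.c (L ≫ D.y B)).hom ▷ D.ext RL) ≫ (α_ (D.y A) (D.lan L) (D.ext RL)).hom) := by
      rw [← hu]
      infer_instance
    exact IsIso.of_isIso_comp_right φL (L ◁ (D.c RL).hom ≫ (α_ L (D.y B) (D.ext RL)).inv ≫
      ((D.c (L ≫ D.y B)).hom ▷ D.ext RL) ≫ (α_ (D.y A) (D.lan L) (D.ext RL)).hom)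
end

section
/- Let (P, y) be a KZ doctrine on a 2-category 𝒞 and L : A ⟶ B a P-admissible 1-cell. Then PL := lan_L is fully faithful if and only if every left extension along L into a P-cocomplete object (as guaranteed by P-admissibility) is exhibited by an invertible 2-cell; that is, if and only if for every P-cocomplete X and every H : A ⟶ X with left extension H̄ of H along y_A, the 2-cell exhibiting H̄·res_L·y_B as a left extension of H along L is invertible. -/
open CategoryTheory Bicategory

universe w v u

variable {𝒞 : Type u} [Bicategory.{w, v} 𝒞]

lemma isIso_of_postcomp_bijective {a b : 𝒞} {v w : a ⟶ b} (θ : v ⟶ w)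
    (h : ∀ u : a ⟶ b, Function.Bijective (fun σ : u ⟶ v => σ ≫ θ)) : IsIso θ := by
  obtain ⟨τ, hτ⟩ := (h w).2 (𝟙 w)
  simp only at hτ
  refine ⟨τ, ?_, hτ⟩
  apply (h v).1
  simp only [Category.assoc, hτ, Category.comp_id, Category.id_comp]

lemma postcomp_bijective_of_isIso {a b : 𝒞} {u v w : a ⟶ b} (θ : v ⟶ w) [IsIso θ] :
    Function.Bijective (fun σ : u ⟶ v => σ ≫ θ) := by
  constructor
  · intro σ σ' h
    simpa using congrArg (fun x => x ≫ inv θ) h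
  · intro δ
    exact ⟨δ ≫ inv θ, by simp⟩

lemma precomp_bijective_of_isIso {a b : 𝒞} {u v w : a ⟶ b} (θ : u ⟶ v) [IsIso θ] :
    Function.Bijective (fun σ : v ⟶ w => θ ≫ σ) := by
  constructor
  · intro σ σ' h
    simpa using congrArg (fun x => inv θ ≫ x) h
  · intro δ
    exact ⟨inv θ ≫ δ, by simp⟩

section AdjHom

variable {a b x : 𝒞} {f : a ⟶ b} {g : b ⟶ a}

/-- Forward map of the hom bijection of a bicategorical adjunction. -/
def adjToFun (adj : Bicategory.Adjunction f g) (u : x ⟶ a) (w : x ⟶ b) (τ : u ≫ f ⟶ w) :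
    u ⟶ w ≫ g :=
  (ρ_ u).inv ≫ u ◁ adj.unit ≫ (α_ u f g).inv ≫ τ ▷ g

/-- Backward map of the hom bijection of a bicategorical adjunction. -/
def adjInvFun (adj : Bicategory.Adjunction f g) (u : x ⟶ a) (w : x ⟶ b) (δ : u ⟶ w ≫ g) :
    u ≫ f ⟶ w :=
  δ ▷ f ≫ (α_ w g f).hom ≫ w ◁ adj.counit ≫ (ρ_ w).hom

lemma adj_left_inv (adj : Bicategory.Adjunction f g) (u : x ⟶ a) (w : x ⟶ b) (τ : u ≫ f ⟶ w) :
    adjInvFun adj u w (adjToFun adj u w τ) = τ := by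
  dsimp only [adjToFun, adjInvFun]
  calc _ = 𝟙 (u ≫ f) ⊗≫ u ◁ adj.unit ▷ f ⊗≫ (τ ▷ (g ≫ f) ≫ w ◁ adj.counit) ⊗≫ 𝟙 w := by
        bicategory
    _ = 𝟙 (u ≫ f) ⊗≫ u ◁ leftZigzag adj.unit adj.counit ⊗≫ 𝟙 (u ≫ f) ≫ τ := by
        rw [← whisker_exchange]; dsimp only [leftZigzag]; bicategory
    _ = τ := by
        rw [adj.left_triangle]; bicategory

lemma adj_right_inv (adj : Bicategory.Adjunction f g) (u : x ⟶ a) (w : x ⟶ b) (δ : u ⟶ w ≫ g) :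
    adjToFun adj u w (adjInvFun adj u w δ) = δ := by
  dsimp only [adjToFun, adjInvFun]
  calc _ = 𝟙 u ⊗≫ (u ◁ adj.unit ≫ δ ▷ (f ≫ g)) ⊗≫ w ◁ adj.counit ▷ g ⊗≫ 𝟙 (w ≫ g) := by
        bicategory
    _ = 𝟙 u ≫ δ ⊗≫ w ◁ rightZigzag adj.unit adj.counit ⊗≫ 𝟙 (w ≫ g) := by
        rw [whisker_exchange]; dsimp only [rightZigzag]; bicategory
    _ = δ := by
        rw [adj.right_triangle]; bicategory

lemma adj_bijective (adj : Bicategory.Adjunction f g) (u : x ⟶ a) (w : x ⟶ b) :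
    Function.Bijective (adjToFun adj u w) := by
  apply Function.bijective_iff_has_inverse.2
  exact ⟨adjInvFun adj u w, adj_left_inv adj u w, adj_right_inv adj u w⟩

lemma adjToFun_whiskerRight (adj : Bicategory.Adjunction f g) {u v : x ⟶ a} (σ : u ⟶ v) :
    adjToFun adj u (v ≫ f) (σ ▷ f) =
      σ ≫ (ρ_ v).inv ≫ v ◁ adj.unit ≫ (α_ v f g).inv := by
  dsimp only [adjToFun]
  calc _ = (ρ_ u).inv ≫ (u ◁ adj.unit ≫ σ ▷ (f ≫ g)) ≫ (α_ v f g).inv := by bicategory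
    _ = (ρ_ u).inv ≫ (σ ▷ 𝟙 a ≫ v ◁ adj.unit) ≫ (α_ v f g).inv := by rw [whisker_exchange]
    _ = σ ≫ (ρ_ v).inv ≫ v ◁ adj.unit ≫ (α_ v f g).inv := by bicategory

end AdjHom

lemma adjInvFun_bijective {a b x : 𝒞} {f : a ⟶ b} {g : b ⟶ a} (adj : Bicategory.Adjunction f g)
    (u : x ⟶ a) (w : x ⟶ b) : Function.Bijective (adjInvFun adj u w) :=
  Function.bijective_iff_has_inverse.2
    ⟨adjToFun adj u w, adj_right_inv adj u w, adj_left_inv adj u w⟩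

lemma ff_iff_isIso_unit {a b : 𝒞} {f : a ⟶ b} {g : b ⟶ a} (adj : Bicategory.Adjunction f g) :
    FullyFaithful1Cell f ↔ IsIso adj.unit := by
  constructor
  · intro hff
    have key : ∀ (x : 𝒞) (v : x ⟶ a), IsIso ((ρ_ v).inv ≫ v ◁ adj.unit ≫ (α_ v f g).inv) := by
      intro x v
      apply isIso_of_postcomp_bijective
      intro u
      have h : (fun σ : u ⟶ v => σ ≫ ((ρ_ v).inv ≫ v ◁ adj.unit ≫ (α_ v f g).inv))
          = (adjToFun adj u (v ≫ f)) ∘ (fun σ : u ⟶ v => σ ▷ f) := by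
        funext σ
        simp [adjToFun_whiskerRight adj σ]
      rw [h]
      exact (adj_bijective adj u (v ≫ f)).comp (hff u v)
    haveI h1 := key a (𝟙 a)
    have h2 : IsIso (𝟙 a ◁ adj.unit) := by
      have e : 𝟙 a ◁ adj.unit = (ρ_ (𝟙 a)).hom ≫
          ((ρ_ (𝟙 a)).inv ≫ 𝟙 a ◁ adj.unit ≫ (α_ (𝟙 a) f g).inv) ≫ (α_ (𝟙 a) f g).hom := by
        simp
      rw [e]; infer_instance
    have h3 : adj.unit = (λ_ (𝟙 a)).inv ≫ (𝟙 a ◁ adj.unit) ≫ (λ_ (f ≫ g)).hom := by simp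
    rw [h3]
    haveI := h2
    infer_instance
  · intro hu x u v
    haveI := hu
    have h : (fun σ : u ⟶ v => σ ▷ f) = (adjInvFun adj u (v ≫ f)) ∘
        (fun σ : u ⟶ v => σ ≫ ((ρ_ v).inv ≫ v ◁ adj.unit ≫ (α_ v f g).inv)) := by
      funext σ
      simp only [Function.comp_apply]
      rw [← adjToFun_whiskerRight adj σ, adj_left_inv]
    rw [h]
    exact (adjInvFun_bijective adj u (v ≫ f)).comp
      (postcomp_bijective_of_isIso ((ρ_ v).inv ≫ v ◁ adj.unit ≫ (α_ v f g).inv))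

lemma exhibits_ofIso {a b c : 𝒞} {L : a ⟶ b} {I : a ⟶ c} {S S' : b ⟶ c}
    {θ : I ⟶ L ≫ S} (hθ : ExhibitsLeftExt L I S θ) (w : S ⟶ S') [IsIso w] :
    ExhibitsLeftExt L I S' (θ ≫ L ◁ w) := by
  intro M
  have h : (fun σ : S' ⟶ M => (θ ≫ L ◁ w) ≫ L ◁ σ)
      = (fun σ : S ⟶ M => θ ≫ L ◁ σ) ∘ (fun σ : S' ⟶ M => w ≫ σ) := by
    funext σ
    simp [Bicategory.whiskerLeft_comp]
  rw [h]
  exact (hθ M).comp (precomp_bijective_of_isIso w)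

lemma isIso_of_exhibits_of_whiskerLeft {a b : 𝒞} {L : a ⟶ b}
    (hid : ExhibitsLeftExt L L (𝟙 b) (ρ_ L).inv)
    {I : a ⟶ b} {K : b ⟶ b} {θ : I ⟶ L ≫ K} (hK : ExhibitsLeftExt L I K θ)
    (η : 𝟙 b ⟶ K) (hw : IsIso (L ◁ η)) : IsIso η := by
  haveI := hw
  obtain ⟨ζ, hζ⟩ := (hK (𝟙 b)).2 (θ ≫ inv (L ◁ η))
  simp only at hζ
  have hζη : ζ ≫ η = 𝟙 K := by
    apply (hK K).1
    show θ ≫ L ◁ (ζ ≫ η) = θ ≫ L ◁ 𝟙 K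
    rw [Bicategory.whiskerLeft_comp, ← Category.assoc, hζ]
    simp
  have hηζ : η ≫ ζ = 𝟙 (𝟙 b) := by
    have e1 : L ◁ ((η ≫ ζ) ≫ η) = L ◁ (𝟙 (𝟙 b) ≫ η) := by
      rw [Category.assoc, hζη]; simp
    simp only [Bicategory.whiskerLeft_comp] at e1
    have hmono : L ◁ (η ≫ ζ) = L ◁ (𝟙 (𝟙 b)) := by
      rw [Bicategory.whiskerLeft_comp]
      exact (cancel_mono (L ◁ η)).1 e1
    apply (hid (𝟙 b)).1
    show (ρ_ L).inv ≫ L ◁ (η ≫ ζ) = (ρ_ L).inv ≫ L ◁ 𝟙 (𝟙 b)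
    rw [hmono]
  exact ⟨ζ, hηζ, hζη⟩


lemma ff_of_iso_unit {a b : 𝒞} {F : a ⟶ b} {G : b ⟶ a} (u' : 𝟙 a ⟶ F ≫ G)
    (ε' : G ≫ F ⟶ 𝟙 b) [IsIso u'] [IsIso (F ◁ ε')] : FullyFaithful1Cell F := by
  intro x u v
  let Θ : (u ≫ F ⟶ v ≫ F) → (u ⟶ v) := fun χ =>
    ((ρ_ u).inv ≫ u ◁ u' ≫ (α_ u F G).inv) ≫ χ ▷ G ≫
      ((α_ v F G).hom ≫ v ◁ inv u' ≫ (ρ_ v).hom)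
  have hL : ∀ σ : u ⟶ v, Θ (σ ▷ F) = σ := by
    intro σ
    show ((ρ_ u).inv ≫ u ◁ u' ≫ (α_ u F G).inv) ≫ (σ ▷ F) ▷ G ≫
      ((α_ v F G).hom ≫ v ◁ inv u' ≫ (ρ_ v).hom) = σ
    calc ((ρ_ u).inv ≫ u ◁ u' ≫ (α_ u F G).inv) ≫ (σ ▷ F) ▷ G ≫
          ((α_ v F G).hom ≫ v ◁ inv u' ≫ (ρ_ v).hom)
        = (ρ_ u).inv ≫ (u ◁ u' ≫ σ ▷ (F ≫ G)) ≫ v ◁ inv u' ≫ (ρ_ v).hom := by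
          bicategory
      _ = (ρ_ u).inv ≫ (σ ▷ 𝟙 a ≫ v ◁ u') ≫ v ◁ inv u' ≫ (ρ_ v).hom := by
          rw [whisker_exchange]
      _ = σ := by
          simp only [Category.assoc, ← Bicategory.whiskerLeft_comp_assoc, IsIso.hom_inv_id]
          simp
  have hGinj : ∀ χ₁ χ₂ : u ≫ F ⟶ v ≫ F, χ₁ ▷ G = χ₂ ▷ G → χ₁ = χ₂ := by
    intro χ₁ χ₂ h
    have h2 : χ₁ ▷ (G ≫ F) = χ₂ ▷ (G ≫ F) := by
      rw [Bicategory.whiskerRight_comp, Bicategory.whiskerRight_comp, h]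
    have h3 := congrArg (fun t => t ≫ (v ≫ F) ◁ ε') h2
    simp only [← whisker_exchange] at h3
    haveI : IsIso ((u ≫ F) ◁ ε') := by rw [comp_whiskerLeft]; infer_instance
    have h4 := (cancel_epi ((u ≫ F) ◁ ε')).1 h3
    rwa [whiskerRight_iff] at h4
  have hθinj : ∀ χ₁ χ₂ : u ≫ F ⟶ v ≫ F, Θ χ₁ = Θ χ₂ → χ₁ = χ₂ := by
    intro χ₁ χ₂ h
    apply hGinj
    have h1 := (cancel_epi ((ρ_ u).inv ≫ u ◁ u' ≫ (α_ u F G).inv)).1 h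
    exact (cancel_mono ((α_ v F G).hom ≫ v ◁ inv u' ≫ (ρ_ v).hom)).1 h1
  constructor
  · intro σ₁ σ₂ h
    simp only at h
    rw [← hL σ₁, ← hL σ₂, h]
  · intro τ
    exact ⟨Θ τ, hθinj _ _ (by rw [hL (Θ τ)])⟩

section KZ

variable (D : KZDoctrine 𝒞) {A B : 𝒞} (L : A ⟶ B) (res : D.P B ⟶ D.P A)
  (adj : Bicategory.Adjunction (D.lan L) res)

lemma pObj_cocomplete (C : 𝒞) : PCocomplete D (D.P C) := by
  intro A' G
  exact ⟨D.ext G, D.c G, D.ext_isLeftExt G, fun {A''} F => D.ext_respects F G⟩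

/-- The canonical 2-cell `y A ⟶ L ≫ (y B ≫ res)` built from the unit. -/
def kzPhi : D.y A ⟶ L ≫ (D.y B ≫ res) :=
  (ρ_ (D.y A)).inv ≫ D.y A ◁ adj.unit ≫ (α_ (D.y A) (D.lan L) res).inv ≫
    (D.c (L ≫ D.y B)).inv ▷ res ≫ (α_ L (D.y B) res).hom

/-- The canonical 2-cell `(y B ≫ res) ≫ lan L ⟶ y B` built from the counit. -/
def kzR0 : (D.y B ≫ res) ≫ D.lan L ⟶ D.y B :=
  (α_ (D.y B) res (D.lan L)).hom ≫ D.y B ◁ adj.counit ≫ (ρ_ (D.y B)).hom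

lemma kz_hr0 :
    (kzPhi D L res adj ▷ D.lan L ≫ (α_ L (D.y B ≫ res) (D.lan L)).hom) ≫
      L ◁ kzR0 D L res adj = (D.c (L ≫ D.y B)).inv := by
  dsimp only [kzPhi, kzR0]
  calc _
      = 𝟙 _ ⊗≫ (D.y A ◁ adj.unit) ▷ D.lan L ⊗≫
          ((D.c (L ≫ D.y B)).inv ▷ (res ≫ D.lan L) ≫ (L ≫ D.y B) ◁ adj.counit) ⊗≫ 𝟙 _ := by
        bicategory
    _ = 𝟙 _ ⊗≫ (D.y A ◁ adj.unit) ▷ D.lan L ⊗≫ (D.y A ≫ D.lan L) ◁ adj.counit ⊗≫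
          (D.c (L ≫ D.y B)).inv ▷ 𝟙 (D.P B) ⊗≫ 𝟙 _ := by
        rw [← whisker_exchange]; bicategory
    _ = 𝟙 _ ⊗≫ D.y A ◁ leftZigzag adj.unit adj.counit ⊗≫
          (D.c (L ≫ D.y B)).inv ▷ 𝟙 (D.P B) ⊗≫ 𝟙 _ := by
        dsimp only [leftZigzag]; bicategory
    _ = 𝟙 _ ⊗≫ D.y A ◁ ((λ_ (D.lan L)).hom ≫ (ρ_ (D.lan L)).inv) ⊗≫
          (D.c (L ≫ D.y B)).inv ▷ 𝟙 (D.P B) ⊗≫ 𝟙 _ := by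
        rw [adj.left_triangle]
    _ = (D.c (L ≫ D.y B)).inv := by
        bicategory

lemma kz_left_triangle {R' : B ⟶ D.P A} (φ : D.y A ⟶ L ≫ R')
    (u' : 𝟙 (D.P A) ⟶ D.lan L ≫ D.ext R') (ε' : D.ext R' ≫ D.lan L ⟶ 𝟙 (D.P B))
    (r0 : R' ≫ D.lan L ⟶ D.y B)
    (hu' : D.y A ◁ u' = (ρ_ (D.y A)).hom ≫ φ ≫ L ◁ (D.c R').hom ≫
      (α_ L (D.y B) (D.ext R')).inv ≫ (D.c (L ≫ D.y B)).hom ▷ D.ext R' ≫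
      (α_ (D.y A) (D.lan L) (D.ext R')).hom)
    (hε' : ((D.c R').hom ▷ D.lan L ≫ (α_ (D.y B) (D.ext R') (D.lan L)).hom) ≫ D.y B ◁ ε'
      = r0 ≫ (ρ_ (D.y B)).inv)
    (hr0 : (φ ▷ D.lan L ≫ (α_ L R' (D.lan L)).hom) ≫ L ◁ r0 = (D.c (L ≫ D.y B)).inv) :
    u' ▷ D.lan L ≫ (α_ (D.lan L) (D.ext R') (D.lan L)).hom ≫ D.lan L ◁ ε'
      = (λ_ (D.lan L)).hom ≫ (ρ_ (D.lan L)).inv := by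
  have inj := (D.ext_isLeftExt (L ≫ D.y B) (D.lan L ≫ 𝟙 (D.P B))).1
  have key : (D.c (L ≫ D.y B)).hom ≫ D.y A ◁ ((λ_ (D.lan L)).inv ≫
        (u' ▷ D.lan L ≫ (α_ (D.lan L) (D.ext R') (D.lan L)).hom ≫ D.lan L ◁ ε'))
      = (D.c (L ≫ D.y B)).hom ≫ D.y A ◁ (ρ_ (D.lan L)).inv := by
    calc _
        = 𝟙 _ ⊗≫ (D.c (L ≫ D.y B)).hom ⊗≫ (D.y A ◁ u') ▷ D.lan L ⊗≫
            D.y A ◁ D.lan L ◁ ε' ⊗≫ 𝟙 _ := by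
          bicategory
      _ = 𝟙 _ ⊗≫ (D.c (L ≫ D.y B)).hom ⊗≫ φ ▷ D.lan L ⊗≫ (L ◁ (D.c R').hom) ▷ D.lan L ⊗≫
            ((D.c (L ≫ D.y B)).hom ▷ (D.ext R' ≫ D.lan L) ≫ (D.y A ≫ D.lan L) ◁ ε') ⊗≫
            𝟙 _ := by
          rw [hu']; bicategory
      _ = 𝟙 _ ⊗≫ (D.c (L ≫ D.y B)).hom ⊗≫ φ ▷ D.lan L ⊗≫ (L ◁ (D.c R').hom) ▷ D.lan L ⊗≫
            (L ≫ D.y B) ◁ ε' ⊗≫ (D.c (L ≫ D.y B)).hom ▷ 𝟙 (D.P B) ⊗≫ 𝟙 _ := by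
          rw [← whisker_exchange]; bicategory
      _ = 𝟙 _ ⊗≫ (D.c (L ≫ D.y B)).hom ⊗≫ φ ▷ D.lan L ⊗≫
            L ◁ (((D.c R').hom ▷ D.lan L ≫ (α_ (D.y B) (D.ext R') (D.lan L)).hom) ≫
              D.y B ◁ ε') ⊗≫ (D.c (L ≫ D.y B)).hom ▷ 𝟙 (D.P B) ⊗≫ 𝟙 _ := by
          bicategory
      _ = 𝟙 _ ⊗≫ (D.c (L ≫ D.y B)).hom ⊗≫ φ ▷ D.lan L ⊗≫ L ◁ (r0 ≫ (ρ_ (D.y B)).inv) ⊗≫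
            (D.c (L ≫ D.y B)).hom ▷ 𝟙 (D.P B) ⊗≫ 𝟙 _ := by
          rw [hε']
      _ = 𝟙 _ ⊗≫ (D.c (L ≫ D.y B)).hom ⊗≫
            ((φ ▷ D.lan L ≫ (α_ L R' (D.lan L)).hom) ≫ L ◁ r0) ⊗≫
            (D.c (L ≫ D.y B)).hom ▷ 𝟙 (D.P B) ⊗≫ 𝟙 _ := by
          bicategory
      _ = 𝟙 _ ⊗≫ ((D.c (L ≫ D.y B)).hom ≫ (D.c (L ≫ D.y B)).inv) ⊗≫
            (D.c (L ≫ D.y B)).hom ▷ 𝟙 (D.P B) ⊗≫ 𝟙 _ := by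
          rw [hr0]; bicategory
      _ = (D.c (L ≫ D.y B)).hom ≫ D.y A ◁ (ρ_ (D.lan L)).inv := by
          rw [Iso.hom_inv_id]; bicategory
  have h2 := inj key
  calc u' ▷ D.lan L ≫ (α_ (D.lan L) (D.ext R') (D.lan L)).hom ≫ D.lan L ◁ ε'
      = (λ_ (D.lan L)).hom ≫ ((λ_ (D.lan L)).inv ≫
        (u' ▷ D.lan L ≫ (α_ (D.lan L) (D.ext R') (D.lan L)).hom ≫ D.lan L ◁ ε')) := by
        simp
    _ = (λ_ (D.lan L)).hom ≫ (ρ_ (D.lan L)).inv := by rw [h2]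

end KZ

/-- For `P`-admissible `L` (with `lan L ⊣ res`), `PL := lan L` is fully
faithful iff for every `P`-cocomplete `X` and every left extension `(Hb, c_H)` of
`H : A ⟶ X` along `y A`, the canonical 2-cell exhibiting `Hb ∘ res ∘ y B` as a left
extension of `H` along `L` is invertible. -/
theorem stmt13 (D : KZDoctrine 𝒞) {A B : 𝒞} (L : A ⟶ B)
    (res : D.P B ⟶ D.P A) (adj : Bicategory.Adjunction (D.lan L) res) :
    FullyFaithful1Cell (D.lan L) ↔
      ∀ (X : 𝒞), PCocomplete D X →
        ∀ (H : A ⟶ X) (Hb : D.P A ⟶ X) (cH : H ≅ D.y A ≫ Hb),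
          ExhibitsLeftExt (D.y A) H Hb cH.hom →
          IsIso (cH.hom ≫ (D.y A ◁ (λ_ Hb).inv) ≫ (D.y A ◁ (adj.unit ▷ Hb)) ≫
            (D.y A ◁ (α_ (D.lan L) res Hb).hom) ≫
            (α_ (D.y A) (D.lan L) (res ≫ Hb)).inv ≫
            ((D.c (L ≫ D.y B)).inv ▷ (res ≫ Hb)) ≫
            (α_ L (D.y B) (res ≫ Hb)).hom) := by
  constructor
  · intro hff X hX H Hb cH hexh
    haveI : IsIso adj.unit := (ff_iff_isIso_unit adj).1 hff
    infer_instance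
  · intro hyp
    have h1 := hyp (D.P A) (pObj_cocomplete D A) (D.y A) (𝟙 (D.P A)) (ρ_ (D.y A)).symm
      (D.y_selfExt A)
    haveI := h1
    haveI i1 : IsIso (D.y A ◁ (λ_ (𝟙 (D.P A))).inv ≫ (D.y A ◁ (adj.unit ▷ 𝟙 (D.P A))) ≫
        (D.y A ◁ (α_ (D.lan L) res (𝟙 (D.P A))).hom) ≫
        (α_ (D.y A) (D.lan L) (res ≫ 𝟙 (D.P A))).inv ≫
        ((D.c (L ≫ D.y B)).inv ▷ (res ≫ 𝟙 (D.P A))) ≫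
        (α_ L (D.y B) (res ≫ 𝟙 (D.P A))).hom) :=
      IsIso.of_isIso_comp_left (ρ_ (D.y A)).symm.hom _
    haveI i2 : IsIso ((D.y A ◁ (adj.unit ▷ 𝟙 (D.P A))) ≫
        (D.y A ◁ (α_ (D.lan L) res (𝟙 (D.P A))).hom) ≫
        (α_ (D.y A) (D.lan L) (res ≫ 𝟙 (D.P A))).inv ≫
        ((D.c (L ≫ D.y B)).inv ▷ (res ≫ 𝟙 (D.P A))) ≫
        (α_ L (D.y B) (res ≫ 𝟙 (D.P A))).hom) :=
      IsIso.of_isIso_comp_left (D.y A ◁ (λ_ (𝟙 (D.P A))).inv) _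
    haveI i3 : IsIso (D.y A ◁ (adj.unit ▷ 𝟙 (D.P A))) :=
      IsIso.of_isIso_comp_right _ ((D.y A ◁ (α_ (D.lan L) res (𝟙 (D.P A))).hom) ≫
        (α_ (D.y A) (D.lan L) (res ≫ 𝟙 (D.P A))).inv ≫
        ((D.c (L ≫ D.y B)).inv ▷ (res ≫ 𝟙 (D.P A))) ≫
        (α_ L (D.y B) (res ≫ 𝟙 (D.P A))).hom)
    haveI i4 : IsIso (D.y A ◁ adj.unit) := by
      have e : D.y A ◁ (adj.unit ▷ 𝟙 (D.P A)) = D.y A ◁ (ρ_ (𝟙 (D.P A))).hom ≫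
          (D.y A ◁ adj.unit) ≫ D.y A ◁ (ρ_ (D.lan L ≫ res)).inv := by
        rw [Bicategory.whiskerRight_id]
        simp [Bicategory.whiskerLeft_comp]
      rw [e] at i3
      haveI i5 : IsIso ((D.y A ◁ adj.unit) ≫ D.y A ◁ (ρ_ (D.lan L ≫ res)).inv) :=
        IsIso.of_isIso_comp_left (D.y A ◁ (ρ_ (𝟙 (D.P A))).hom) _
      exact IsIso.of_isIso_comp_right _ (D.y A ◁ (ρ_ (D.lan L ≫ res)).inv)
    obtain ⟨u', hu'0⟩ := (D.y_selfExt A (D.lan L ≫ D.ext (D.y B ≫ res))).2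
      (kzPhi D L res adj ≫ L ◁ (D.c (D.y B ≫ res)).hom ≫
        (α_ L (D.y B) (D.ext (D.y B ≫ res))).inv ≫
        (D.c (L ≫ D.y B)).hom ▷ D.ext (D.y B ≫ res) ≫
        (α_ (D.y A) (D.lan L) (D.ext (D.y B ≫ res))).hom)
    simp only at hu'0
    have hu' : D.y A ◁ u' = (ρ_ (D.y A)).hom ≫ kzPhi D L res adj ≫
        L ◁ (D.c (D.y B ≫ res)).hom ≫ (α_ L (D.y B) (D.ext (D.y B ≫ res))).inv ≫
        (D.c (L ≫ D.y B)).hom ▷ D.ext (D.y B ≫ res) ≫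
        (α_ (D.y A) (D.lan L) (D.ext (D.y B ≫ res))).hom := by
      rw [← hu'0]; simp
    obtain ⟨ε', hε'0⟩ := ((show ExhibitsLeftExt (D.y B) ((D.y B ≫ res) ≫ D.lan L)
        (D.ext (D.y B ≫ res) ≫ D.lan L)
        ((D.c (D.y B ≫ res)).hom ▷ D.lan L ≫
          (α_ (D.y B) (D.ext (D.y B ≫ res)) (D.lan L)).hom) from
        D.ext_respects (D.y B ≫ res) (L ≫ D.y B)) (𝟙 (D.P B))).2
      (kzR0 D L res adj ≫ (ρ_ (D.y B)).inv)
    simp only at hε'0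
    haveI hyu : IsIso (D.y A ◁ u') := by
      rw [hu']
      dsimp only [kzPhi]
      infer_instance
    haveI hu'iso : IsIso u' := isIso_of_exhibits_of_whiskerLeft (D.y_selfExt A)
      (show ExhibitsLeftExt (D.y A) ((L ≫ D.y B) ≫ D.ext (D.y B ≫ res))
        (D.lan L ≫ D.ext (D.y B ≫ res))
        ((D.c (L ≫ D.y B)).hom ▷ D.ext (D.y B ≫ res) ≫
          (α_ (D.y A) (D.lan L) (D.ext (D.y B ≫ res))).hom) from
        D.ext_respects (L ≫ D.y B) (D.y B ≫ res)) u' hyu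
    have hLT := kz_left_triangle D L (kzPhi D L res adj) u' ε' (kzR0 D L res adj)
      hu' hε'0 (kz_hr0 D L res adj)
    haveI iz : IsIso (u' ▷ D.lan L ≫
        (α_ (D.lan L) (D.ext (D.y B ≫ res)) (D.lan L)).hom ≫ D.lan L ◁ ε') := by
      rw [hLT]; infer_instance
    haveI : IsIso ((α_ (D.lan L) (D.ext (D.y B ≫ res)) (D.lan L)).hom ≫ D.lan L ◁ ε') :=
      IsIso.of_isIso_comp_left (u' ▷ D.lan L) _
    haveI : IsIso (D.lan L ◁ ε') :=
      IsIso.of_isIso_comp_left (α_ (D.lan L) (D.ext (D.y B ≫ res)) (D.lan L)).hom _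
    intro x u v
    exact ff_of_iso_unit u' ε' u v
end

section
/- Let (P, y) be a KZ doctrine on a 2-category 𝒞. An object X of 𝒞 is P-cocomplete if and only if the unit y_X : X ⟶ PX has a left adjoint whose counit is invertible. -/
open CategoryTheory Bicategory

universe w v u

variable {𝒞 : Type u} [Bicategory.{w, v} 𝒞]

namespace Stmt16Aux

variable {p x : 𝒞} {l : p ⟶ x} {g : x ⟶ p}

/-- Transposition across an adjunction, in hom-form. -/
def adjHomEquiv (adj : Adjunction l g) {z : 𝒞} (W : z ⟶ p) (M : z ⟶ x) :
    (W ≫ l ⟶ M) ≃ (W ⟶ M ≫ g) where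
  toFun σ := (ρ_ W).inv ≫ W ◁ adj.unit ≫ (α_ W l g).inv ≫ σ ▷ g
  invFun τ := τ ▷ l ≫ (α_ M g l).hom ≫ M ◁ adj.counit ≫ (ρ_ M).hom
  left_inv σ := by
    calc ((ρ_ W).inv ≫ W ◁ adj.unit ≫ (α_ W l g).inv ≫ σ ▷ g) ▷ l ≫ (α_ M g l).hom ≫
          M ◁ adj.counit ≫ (ρ_ M).hom
        = 𝟙 _ ⊗≫ W ◁ adj.unit ▷ l ⊗≫ (σ ▷ (g ≫ l) ≫ M ◁ adj.counit) ⊗≫ 𝟙 _ := by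
          bicategory
      _ = 𝟙 _ ⊗≫ W ◁ adj.unit ▷ l ⊗≫ ((W ≫ l) ◁ adj.counit ≫ σ ▷ 𝟙 x) ⊗≫ 𝟙 _ := by
          rw [← whisker_exchange]
      _ = 𝟙 _ ⊗≫ W ◁ (leftZigzag adj.unit adj.counit) ⊗≫ σ ⊗≫ 𝟙 _ := by
          rw [leftZigzag]; bicategory
      _ = σ := by rw [adj.left_triangle]; bicategory
  right_inv τ := by
    calc (ρ_ W).inv ≫ W ◁ adj.unit ≫ (α_ W l g).inv ≫
          (τ ▷ l ≫ (α_ M g l).hom ≫ M ◁ adj.counit ≫ (ρ_ M).hom) ▷ g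
        = 𝟙 _ ⊗≫ (W ◁ adj.unit ≫ τ ▷ (l ≫ g)) ⊗≫ M ◁ adj.counit ▷ g ⊗≫ 𝟙 _ := by
          bicategory
      _ = 𝟙 _ ⊗≫ (τ ▷ 𝟙 p ≫ (M ≫ g) ◁ adj.unit) ⊗≫ M ◁ adj.counit ▷ g ⊗≫ 𝟙 _ := by
          rw [whisker_exchange]
      _ = 𝟙 _ ⊗≫ τ ⊗≫ M ◁ (rightZigzag adj.unit adj.counit) ⊗≫ 𝟙 _ := by
          rw [rightZigzag]; bicategory
      _ = τ := by rw [adj.right_triangle]; bicategory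

theorem bij_of_eq {α β : Sort*} {f h : α → β} (e : ∀ a, f a = h a)
    (hf : Function.Bijective f) : Function.Bijective h := by
  have : f = h := funext e
  rwa [← this]

theorem bij_cancel {α β γ : Sort*} {m : α → β} {q : β → γ}
    (hq : Function.Bijective q) (h : Function.Bijective (q ∘ m)) : Function.Bijective m := by
  constructor
  · intro a a' ha
    exact h.1 (by simp [Function.comp, ha])
  · intro b
    obtain ⟨a, ha⟩ := h.2 (q b)
    exact ⟨a, hq.1 ha⟩

/-- A right adjoint with invertible counit is representably fully faithful. -/
theorem whiskerRight_bijective_of_counit_iso (adj : Adjunction l g) [IsIso adj.counit]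
    {z : 𝒞} (u v : z ⟶ x) : Function.Bijective (fun σ : u ⟶ v => σ ▷ g) := by
  have key : ∀ σ : u ⟶ v,
      (adjHomEquiv adj (u ≫ g) v) (((α_ u g l).hom ≫ u ◁ adj.counit ≫ (ρ_ u).hom) ≫ σ)
        = σ ▷ g := by
    intro σ
    calc (ρ_ (u ≫ g)).inv ≫ (u ≫ g) ◁ adj.unit ≫ (α_ (u ≫ g) l g).inv ≫
          (((α_ u g l).hom ≫ u ◁ adj.counit ≫ (ρ_ u).hom) ≫ σ) ▷ g
        = 𝟙 _ ⊗≫ u ◁ (rightZigzag adj.unit adj.counit) ⊗≫ σ ▷ g ⊗≫ 𝟙 _ := by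
          rw [rightZigzag]; bicategory
      _ = σ ▷ g := by rw [adj.right_triangle]; bicategory
  have h1 : Function.Bijective
      (fun σ : u ⟶ v => ((α_ u g l).hom ≫ u ◁ adj.counit ≫ (ρ_ u).hom) ≫ σ) :=
    bij_of_eq (fun σ => by simp [Iso.homCongr])
      (Iso.homCongr (asIso ((α_ u g l).hom ≫ u ◁ adj.counit ≫ (ρ_ u).hom)).symm
        (Iso.refl v)).bijective
  exact bij_of_eq key ((adjHomEquiv adj (u ≫ g) v).bijective.comp h1)

/-- The triangle identity in explicit associator form. -/
theorem right_triangle' (adj : Adjunction l g) :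
    g ◁ adj.unit ≫ (α_ g l g).inv ≫ adj.counit ▷ g = (ρ_ g).hom ≫ (λ_ g).inv := by
  calc g ◁ adj.unit ≫ (α_ g l g).inv ≫ adj.counit ▷ g
      = rightZigzag adj.unit adj.counit := by rw [rightZigzag]; bicategory
    _ = _ := adj.right_triangle

theorem right_triangle'' (adj : Adjunction l g) [IsIso adj.counit] :
    g ◁ adj.unit =
      (ρ_ g).hom ≫ (λ_ g).inv ≫ inv adj.counit ▷ g ≫ (α_ g l g).hom := by
  rw [← cancel_mono ((α_ g l g).inv ≫ adj.counit ▷ g)]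
  simp only [Category.assoc, right_triangle' adj, Iso.hom_inv_id_assoc]
  rw [← comp_whiskerRight, IsIso.inv_hom_id, id_whiskerRight]
  simp

end Stmt16Aux

open Stmt16Aux in
theorem stmt16_backward (D : KZDoctrine 𝒞) (X : 𝒞) (l : D.P X ⟶ X)
    (adj : Adjunction l (D.y X)) [IsIso adj.counit] : PCocomplete D X := by
  intro A G
  refine ⟨D.ext (G ≫ D.y X) ≫ l,
    (ρ_ G).symm ≪≫ (whiskerLeftIso G (asIso adj.counit)).symm ≪≫ (α_ G (D.y X) l).symm ≪≫
      whiskerRightIso (D.c (G ≫ D.y X)) l ≪≫ α_ (D.y A) (D.ext (G ≫ D.y X)) l, ?_, ?_⟩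
  · -- the exhibiting property
    intro M
    have key : ∀ σ : D.ext (G ≫ D.y X) ≫ l ⟶ M,
        ((D.c (G ≫ D.y X)).hom ≫ D.y A ◁ ((adjHomEquiv adj (D.ext (G ≫ D.y X)) M) σ)) ≫
            (α_ (D.y A) M (D.y X)).inv =
        ((((ρ_ G).symm ≪≫ (whiskerLeftIso G (asIso adj.counit)).symm ≪≫
            (α_ G (D.y X) l).symm ≪≫ whiskerRightIso (D.c (G ≫ D.y X)) l ≪≫
              α_ (D.y A) (D.ext (G ≫ D.y X)) l).hom) ≫ D.y A ◁ σ) ▷ D.y X := by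
      intro σ
      calc ((D.c (G ≫ D.y X)).hom ≫ D.y A ◁ ((adjHomEquiv adj (D.ext (G ≫ D.y X)) M) σ)) ≫
            (α_ (D.y A) M (D.y X)).inv
          = 𝟙 _ ⊗≫ ((D.c (G ≫ D.y X)).hom ▷ 𝟙 _ ≫
                (D.y A ≫ D.ext (G ≫ D.y X)) ◁ adj.unit) ⊗≫
              (D.y A ◁ σ) ▷ D.y X ⊗≫ 𝟙 _ := by
            dsimp [adjHomEquiv]; bicategory
        _ = 𝟙 _ ⊗≫ ((G ≫ D.y X) ◁ adj.unit ≫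
                (D.c (G ≫ D.y X)).hom ▷ (l ≫ D.y X)) ⊗≫
              (D.y A ◁ σ) ▷ D.y X ⊗≫ 𝟙 _ := by
            rw [← whisker_exchange]
        _ = 𝟙 _ ⊗≫ G ◁ (D.y X ◁ adj.unit) ⊗≫ (D.c (G ≫ D.y X)).hom ▷ (l ≫ D.y X) ⊗≫
              (D.y A ◁ σ) ▷ D.y X ⊗≫ 𝟙 _ := by
            bicategory
        _ = 𝟙 _ ⊗≫ G ◁ ((ρ_ (D.y X)).hom ≫ (λ_ (D.y X)).inv ≫ inv adj.counit ▷ D.y X ≫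
                (α_ (D.y X) l (D.y X)).hom) ⊗≫
              (D.c (G ≫ D.y X)).hom ▷ (l ≫ D.y X) ⊗≫ (D.y A ◁ σ) ▷ D.y X ⊗≫ 𝟙 _ := by
            rw [right_triangle'' adj]
        _ = _ := by
            simp only [Iso.trans_hom, Iso.symm_hom, whiskerLeftIso_inv, asIso_inv,
              whiskerRightIso_hom, Category.assoc]
            bicategory
    have bpost : Function.Bijective
        (fun θ : G ≫ D.y X ⟶ D.y A ≫ M ≫ D.y X => θ ≫ (α_ (D.y A) M (D.y X)).inv) :=
      bij_of_eq (fun θ => by simp [Iso.homCongr])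
        (Iso.homCongr (Iso.refl (G ≫ D.y X)) (α_ (D.y A) M (D.y X)).symm).bijective
    have hcomp : Function.Bijective
        (fun σ : D.ext (G ≫ D.y X) ≫ l ⟶ M =>
          ((D.c (G ≫ D.y X)).hom ≫ D.y A ◁ ((adjHomEquiv adj (D.ext (G ≫ D.y X)) M) σ)) ≫
            (α_ (D.y A) M (D.y X)).inv) :=
      bpost.comp ((D.ext_isLeftExt (G ≫ D.y X) (M ≫ D.y X)).comp
        (adjHomEquiv adj (D.ext (G ≫ D.y X)) M).bijective)
    exact bij_cancel (whiskerRight_bijective_of_counit_iso adj G (D.y A ≫ M))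
      (bij_of_eq key hcomp)
  · -- the respecting property
    intro A' F M
    have key : ∀ σ : D.ext F ≫ D.ext (G ≫ D.y X) ≫ l ⟶ M,
        (adjHomEquiv adj (F ≫ D.ext (G ≫ D.y X)) (D.y A' ≫ M))
          ((α_ F (D.ext (G ≫ D.y X)) l).hom ≫
            (((D.c F).hom ▷ (D.ext (G ≫ D.y X) ≫ l)) ≫
              (α_ (D.y A') (D.ext F) (D.ext (G ≫ D.y X) ≫ l)).hom) ≫ D.y A' ◁ σ) =
        ((((D.c F).hom ▷ D.ext (G ≫ D.y X)) ≫
            (α_ (D.y A') (D.ext F) (D.ext (G ≫ D.y X))).hom) ≫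
          D.y A' ◁ ((adjHomEquiv adj (D.ext F ≫ D.ext (G ≫ D.y X)) M)
            ((α_ (D.ext F) (D.ext (G ≫ D.y X)) l).hom ≫ σ))) ≫
              (α_ (D.y A') M (D.y X)).inv := by
      intro σ
      calc (adjHomEquiv adj (F ≫ D.ext (G ≫ D.y X)) (D.y A' ≫ M))
            ((α_ F (D.ext (G ≫ D.y X)) l).hom ≫
              (((D.c F).hom ▷ (D.ext (G ≫ D.y X) ≫ l)) ≫
                (α_ (D.y A') (D.ext F) (D.ext (G ≫ D.y X) ≫ l)).hom) ≫ D.y A' ◁ σ)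
          = 𝟙 _ ⊗≫ ((F ≫ D.ext (G ≫ D.y X)) ◁ adj.unit ≫
                (((D.c F).hom ▷ D.ext (G ≫ D.y X)) ≫
                  (α_ (D.y A') (D.ext F) (D.ext (G ≫ D.y X))).hom) ▷ (l ≫ D.y X)) ⊗≫
              (D.y A' ◁ ((α_ (D.ext F) (D.ext (G ≫ D.y X)) l).hom ≫ σ)) ▷ D.y X ⊗≫ 𝟙 _ := by
            dsimp [adjHomEquiv]; bicategory
        _ = 𝟙 _ ⊗≫ ((((D.c F).hom ▷ D.ext (G ≫ D.y X)) ≫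
                  (α_ (D.y A') (D.ext F) (D.ext (G ≫ D.y X))).hom) ▷ 𝟙 _ ≫
                (D.y A' ≫ D.ext F ≫ D.ext (G ≫ D.y X)) ◁ adj.unit) ⊗≫
              (D.y A' ◁ ((α_ (D.ext F) (D.ext (G ≫ D.y X)) l).hom ≫ σ)) ▷ D.y X ⊗≫ 𝟙 _ := by
            rw [whisker_exchange]
        _ = _ := by dsimp [adjHomEquiv]; bicategory
    have hmain : ∀ σ : D.ext F ≫ D.ext (G ≫ D.y X) ≫ l ⟶ M,
        (((D.c F).hom ▷ (D.ext (G ≫ D.y X) ≫ l)) ≫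
            (α_ (D.y A') (D.ext F) (D.ext (G ≫ D.y X) ≫ l)).hom) ≫ D.y A' ◁ σ =
        (α_ F (D.ext (G ≫ D.y X)) l).inv ≫
          (adjHomEquiv adj (F ≫ D.ext (G ≫ D.y X)) (D.y A' ≫ M)).symm
            (((((D.c F).hom ▷ D.ext (G ≫ D.y X)) ≫
                (α_ (D.y A') (D.ext F) (D.ext (G ≫ D.y X))).hom) ≫
              D.y A' ◁ ((adjHomEquiv adj (D.ext F ≫ D.ext (G ≫ D.y X)) M)
                ((α_ (D.ext F) (D.ext (G ≫ D.y X)) l).hom ≫ σ))) ≫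
                  (α_ (D.y A') M (D.y X)).inv) := by
      intro σ
      rw [← key σ, Equiv.symm_apply_apply, Iso.inv_hom_id_assoc]
    have b1 : Function.Bijective
        (fun σ : D.ext F ≫ D.ext (G ≫ D.y X) ≫ l ⟶ M =>
          (α_ (D.ext F) (D.ext (G ≫ D.y X)) l).hom ≫ σ) :=
      bij_of_eq (fun θ => by simp [Iso.homCongr])
        (Iso.homCongr (α_ (D.ext F) (D.ext (G ≫ D.y X)) l).symm (Iso.refl M)).bijective
    have b4 : Function.Bijective
        (fun θ : F ≫ D.ext (G ≫ D.y X) ⟶ D.y A' ≫ M ≫ D.y X =>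
          θ ≫ (α_ (D.y A') M (D.y X)).inv) :=
      bij_of_eq (fun θ => by simp [Iso.homCongr])
        (Iso.homCongr (Iso.refl (F ≫ D.ext (G ≫ D.y X)))
          (α_ (D.y A') M (D.y X)).symm).bijective
    have b6 : Function.Bijective
        (fun θ : (F ≫ D.ext (G ≫ D.y X)) ≫ l ⟶ D.y A' ≫ M =>
          (α_ F (D.ext (G ≫ D.y X)) l).inv ≫ θ) :=
      bij_of_eq (fun θ => by simp [Iso.homCongr])
        (Iso.homCongr (α_ F (D.ext (G ≫ D.y X)) l) (Iso.refl (D.y A' ≫ M))).bijective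
    have hcomp : Function.Bijective
        (fun σ : D.ext F ≫ D.ext (G ≫ D.y X) ≫ l ⟶ M =>
          (α_ F (D.ext (G ≫ D.y X)) l).inv ≫
            (adjHomEquiv adj (F ≫ D.ext (G ≫ D.y X)) (D.y A' ≫ M)).symm
              (((((D.c F).hom ▷ D.ext (G ≫ D.y X)) ≫
                  (α_ (D.y A') (D.ext F) (D.ext (G ≫ D.y X))).hom) ≫
                D.y A' ◁ ((adjHomEquiv adj (D.ext F ≫ D.ext (G ≫ D.y X)) M)
                  ((α_ (D.ext F) (D.ext (G ≫ D.y X)) l).hom ≫ σ))) ≫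
                    (α_ (D.y A') M (D.y X)).inv)) :=
      b6.comp ((adjHomEquiv adj (F ≫ D.ext (G ≫ D.y X)) (D.y A' ≫ M)).symm.bijective.comp
        (b4.comp ((D.ext_respects F (G ≫ D.y X) (M ≫ D.y X)).comp
          ((adjHomEquiv adj (D.ext F ≫ D.ext (G ≫ D.y X)) M).bijective.comp b1))))
    exact bij_of_eq (fun σ => (hmain σ).symm) hcomp

open Stmt16Aux in
theorem stmt16_forward (D : KZDoctrine 𝒞) (X : 𝒞) (h : PCocomplete D X) :
    ∃ (l : D.P X ⟶ X) (adj : Bicategory.Adjunction l (D.y X)), IsIso adj.counit := by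
  obtain ⟨Gb, cG, hext, -⟩ := h (𝟙 X)
  obtain ⟨η, hη⟩ := (D.y_selfExt X (Gb ≫ D.y X)).surjective
    ((λ_ (D.y X)).inv ≫ cG.hom ▷ D.y X ≫ (α_ (D.y X) Gb (D.y X)).hom)
  have hη' : D.y X ◁ η =
      (ρ_ (D.y X)).hom ≫ (λ_ (D.y X)).inv ≫ cG.hom ▷ D.y X ≫ (α_ (D.y X) Gb (D.y X)).hom := by
    rw [← hη, Iso.hom_inv_id_assoc]
  have hu : (λ_ Gb).inv ≫ leftZigzag η cG.inv ≫ (ρ_ Gb).hom = 𝟙 Gb := by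
    apply (hext Gb).injective
    show cG.hom ≫ D.y X ◁ ((λ_ Gb).inv ≫ leftZigzag η cG.inv ≫ (ρ_ Gb).hom) =
      cG.hom ≫ D.y X ◁ 𝟙 Gb
    calc cG.hom ≫ D.y X ◁ ((λ_ Gb).inv ≫ leftZigzag η cG.inv ≫ (ρ_ Gb).hom)
        = 𝟙 _ ⊗≫ cG.hom ⊗≫ (D.y X ◁ η) ▷ Gb ⊗≫ (D.y X ≫ Gb) ◁ cG.inv ⊗≫ 𝟙 _ := by
          rw [leftZigzag]; bicategory
      _ = 𝟙 _ ⊗≫ cG.hom ⊗≫ (cG.hom ▷ (D.y X ≫ Gb) ≫ (D.y X ≫ Gb) ◁ cG.inv) ⊗≫ 𝟙 _ := by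
          rw [hη']; bicategory
      _ = 𝟙 _ ⊗≫ cG.hom ⊗≫ (𝟙 X ◁ cG.inv ≫ cG.hom ▷ 𝟙 X) ⊗≫ 𝟙 _ := by
          rw [← whisker_exchange]
      _ = (cG.hom ≫ cG.inv) ≫ cG.hom := by bicategory
      _ = cG.hom ≫ D.y X ◁ 𝟙 Gb := by simp
  refine ⟨Gb, ⟨η, cG.inv, ?_, ?_⟩, ?_⟩
  · calc leftZigzag η cG.inv
        = (λ_ Gb).hom ≫ ((λ_ Gb).inv ≫ leftZigzag η cG.inv ≫ (ρ_ Gb).hom) ≫ (ρ_ Gb).inv := by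
          simp
      _ = _ := by rw [hu]; simp
  · calc rightZigzag η cG.inv
        = 𝟙 _ ⊗≫ D.y X ◁ η ⊗≫ cG.inv ▷ D.y X ⊗≫ 𝟙 _ := by rw [rightZigzag]; bicategory
      _ = 𝟙 _ ⊗≫ (cG.hom ≫ cG.inv) ▷ D.y X ⊗≫ 𝟙 _ := by rw [hη']; bicategory
      _ = _ := by rw [Iso.hom_inv_id]; bicategory
  · exact inferInstance

/-- `X` is `P`-cocomplete iff the unit `y X` has a left adjoint with
invertible counit. -/
theorem stmt16 (D : KZDoctrine 𝒞) (X : 𝒞) :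
    PCocomplete D X ↔
      ∃ (l : D.P X ⟶ X) (adj : Bicategory.Adjunction l (D.y X)),
        IsIso adj.counit := by
  constructor
  · exact fun h => stmt16_forward D X h
  · rintro ⟨l, adj, hiso⟩
    haveI := hiso
    exact fun {A} G => stmt16_backward D X l adj G
end

section
/- Let 𝒞 be a 2-category. The identity assignment P A := A together with units y_A := id_A and left extensions F̄ := F (exhibited by identity 2-cells) forms a KZ doctrine on 𝒞, and for this identity KZ doctrine a 1-cell L : A ⟶ B is P-admissible if and only if L has a right adjoint in 𝒞. Consequently, if 𝒞 contains a 1-cell with no right adjoint, then the class of P-admissible 1-cells of this KZ doctrine contains all identity 1-cells but is not a right ideal. -/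
open CategoryTheory Bicategory

universe w v u

variable {𝒞 : Type u} [Bicategory.{w, v} 𝒞]

section Aux

/-- Bridge: `ExhibitsLeftExt` coincides with mathlib's `IsKan` for left extensions. -/
lemma exhibits_iff_isKan {a b c : 𝒞} (L : a ⟶ b) (I : a ⟶ c) (R : b ⟶ c)
    (η : I ⟶ L ≫ R) :
    ExhibitsLeftExt L I R η ↔ Nonempty (LeftExtension.mk R η).IsKan := by
  constructor
  · intro h
    refine ⟨LeftExtension.IsKan.mk
      (fun s => LeftExtension.homMk ((Equiv.ofBijective _ (h s.extension)).symm s.unit)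
        ((Equiv.ofBijective _ (h s.extension)).apply_symm_apply s.unit))
      (fun s τ => ?_)⟩
    apply StructuredArrow.hom_ext
    apply (h s.extension).injective
    exact (LeftExtension.w τ).trans
      (((Equiv.ofBijective _ (h s.extension)).apply_symm_apply s.unit).symm)
  · rintro ⟨H⟩ M
    constructor
    · intro σ σ' hσ
      exact H.hom_ext hσ
    · intro τ
      exact ⟨H.desc (LeftExtension.mk M τ), H.fac (LeftExtension.mk M τ)⟩

/-- Any invertible 2-cell `η : I ⟶ 𝟙 a ≫ R` exhibits `R` as a left extension of `I`
along the identity. -/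
lemma exhibits_of_isIso_id {a c : 𝒞} {I R : a ⟶ c} (η : I ⟶ 𝟙 a ≫ R) [IsIso η] :
    ExhibitsLeftExt (𝟙 a) I R η := by
  intro M
  rw [Function.bijective_iff_has_inverse]
  refine ⟨fun τ => (λ_ R).inv ≫ inv η ≫ τ ≫ (λ_ M).hom, fun σ => ?_, fun τ => ?_⟩ <;>
    simp

/-- Composition with an invertible 2-cell is bijective. -/
lemma comp_iso_bijective {a b : 𝒞} {X Y Z : a ⟶ b} (e : Y ⟶ Z) [IsIso e] :
    Function.Bijective (fun τ : X ⟶ Y => τ ≫ e) := by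
  rw [Function.bijective_iff_has_inverse]
  exact ⟨fun τ => τ ≫ inv e, fun τ => by simp, fun τ => by simp⟩

/-- Left extensions transport along isomorphisms of the 1-cell extended along. -/
lemma exhibits_of_iso_src {a b c : 𝒞} {L' L : a ⟶ b} (i : L' ≅ L) {I : a ⟶ c} {R : b ⟶ c}
    {η : I ⟶ L' ≫ R} (h : ExhibitsLeftExt L' I R η) :
    ExhibitsLeftExt L I R (η ≫ i.hom ▷ R) := by
  intro M
  have key : (fun σ : R ⟶ M => (η ≫ i.hom ▷ R) ≫ L ◁ σ)
      = (fun τ : I ⟶ L' ≫ M => τ ≫ i.hom ▷ M) ∘ (fun σ : R ⟶ M => η ≫ L' ◁ σ) := by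
    funext σ
    simp [whisker_exchange]
  rw [key]
  exact (comp_iso_bijective (i.hom ▷ M)).comp (h M)

end Aux

/-- The identity KZ doctrine. -/
def idKZ (𝒞 : Type u) [Bicategory.{w, v} 𝒞] : KZDoctrine 𝒞 where
  P A := A
  y A := 𝟙 A
  ext F := F
  c F := (λ_ F).symm
  ext_isLeftExt F := exhibits_of_isIso_id _
  y_selfExt A := exhibits_of_isIso_id _
  ext_respects F G := exhibits_of_isIso_id _

/-- Every object is cocomplete for the identity KZ doctrine. -/
lemma idKZ_cocomplete (X : 𝒞) : PCocomplete (idKZ 𝒞) X :=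
  fun {_} G => ⟨G, (λ_ G).symm, exhibits_of_isIso_id _, fun F =>
    @exhibits_of_isIso_id _ _ _ _ _ _ _ (Iso.isIso_hom (whiskerRightIso ((idKZ 𝒞).c F) G ≪≫ α_ _ _ _))⟩

/-- For the identity KZ doctrine, admissibility is the same as having a right adjoint. -/
lemma idKZ_admissible_iff {A B : 𝒞} (L : A ⟶ B) :
    PAdmissible (idKZ 𝒞) L ↔ ∃ R : B ⟶ A, Nonempty (Bicategory.Adjunction L R) := by
  constructor
  · rintro ⟨R, φ, h1, h2⟩
    have habs : LeftExtension.IsAbsKan (LeftExtension.mk R φ) := by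
      intro x h
      have h3 : RespectsLeftExt L (𝟙 A) R φ h :=
        h2 (idKZ_cocomplete x) h h (λ_ h).symm
          (@exhibits_of_isIso_id _ _ _ _ _ _ _ (Iso.isIso_hom (λ_ h).symm))
      exact ((exhibits_iff_isKan L (𝟙 A ≫ h) (R ≫ h) _).mp h3).some
    exact ⟨R, ⟨LeftExtension.IsAbsKan.adjunction _ habs⟩⟩
  · rintro ⟨R, ⟨adj⟩⟩
    refine ⟨R, adj.unit, ?_, ?_⟩
    · exact (exhibits_iff_isKan _ _ _ _).mpr
        ⟨LeftExtension.IsAbsKan.isKan adj.isAbsoluteLeftKan⟩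
    · intro X hX H Hb cH hexh
      exact (exhibits_iff_isKan _ _ _ _).mpr ⟨adj.isAbsoluteLeftKan Hb⟩

/-- Admissibility of `L ≫ 𝟙 B` implies admissibility of `L`. -/
lemma idKZ_admissible_of_comp_id {A B : 𝒞} (L : A ⟶ B)
    (h : PAdmissible (idKZ 𝒞) (L ≫ 𝟙 B)) : PAdmissible (idKZ 𝒞) L := by
  obtain ⟨R, φ, h1, h2⟩ := h
  refine ⟨R, φ ≫ (ρ_ L).hom ▷ R, exhibits_of_iso_src (ρ_ L) h1, ?_⟩
  intro X hX H Hb cH hexh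
  have h3 : RespectsLeftExt (L ≫ 𝟙 B) (𝟙 A) R φ Hb := h2 hX H Hb cH hexh
  show ExhibitsLeftExt L (𝟙 A ≫ Hb) (R ≫ Hb) _
  have key : (((φ ≫ (ρ_ L).hom ▷ R) ▷ Hb) ≫ (α_ L R Hb).hom)
      = ((φ ▷ Hb) ≫ (α_ (L ≫ 𝟙 B) R Hb).hom) ≫ (ρ_ L).hom ▷ (R ≫ Hb) := by
    rw [comp_whiskerRight, Category.assoc, associator_naturality_left]
    simp only [Category.assoc]
  rw [key]
  exact exhibits_of_iso_src (ρ_ L) h3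
/-- The identity assignment with identity units and `F̄ := F` (exhibited by
identity 2-cells, i.e. unitors) forms a KZ doctrine; for it, a 1-cell is `P`-admissible
iff it has a right adjoint; hence all identities are admissible, but if `𝒞` has a 1-cell
with no right adjoint then the admissible 1-cells do not form a right ideal. -/
theorem stmt18 (𝒞 : Type u) [Bicategory.{w, v} 𝒞] :
    ∃ D : KZDoctrine 𝒞,
      D.P = (fun A => A) ∧
      HEq D.y (fun A : 𝒞 => 𝟙 A) ∧
      HEq (fun (A C : 𝒞) (F : A ⟶ D.P C) => D.ext F)
        (fun (A C : 𝒞) (F : A ⟶ C) => F) ∧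
      HEq (fun (A C : 𝒞) (F : A ⟶ D.P C) => D.c F)
        (fun (A C : 𝒞) (F : A ⟶ C) => (λ_ F).symm) ∧
      (∀ {A B : 𝒞} (L : A ⟶ B),
        PAdmissible D L ↔ ∃ R : B ⟶ A, Nonempty (Bicategory.Adjunction L R)) ∧
      (∀ A : 𝒞, PAdmissible D (𝟙 A)) ∧
      ((∃ (A B : 𝒞) (L : A ⟶ B),
          ∀ R : B ⟶ A, IsEmpty (Bicategory.Adjunction L R)) →
        ¬ ∀ {A B X : 𝒞} (L : A ⟶ B) (F : X ⟶ A),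
            PAdmissible D L → PAdmissible D (F ≫ L)) := by
  refine ⟨idKZ 𝒞, rfl, HEq.rfl, HEq.rfl, HEq.rfl, ?_, ?_, ?_⟩
  · intro A B L
    exact idKZ_admissible_iff L
  · intro A
    exact (idKZ_admissible_iff _).mpr ⟨𝟙 A, ⟨Bicategory.Adjunction.id A⟩⟩
  · rintro ⟨A, B, L, hL⟩ hideal
    have h1 : PAdmissible (idKZ 𝒞) (L ≫ 𝟙 B) :=
      hideal (𝟙 B) L ((idKZ_admissible_iff _).mpr ⟨𝟙 B, ⟨Bicategory.Adjunction.id B⟩⟩)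
    obtain ⟨R, ⟨adj⟩⟩ := (idKZ_admissible_iff L).mp (idKZ_admissible_of_comp_id L h1)
    exact (hL R).false adj
end
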